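/- arXiv:1706.01031 — 5 statements merged into one kernel-verified Lean document; each statement's English description precedes it below -/
import Mathlib

section
/- Let (D,d) be a separable metric space and S a countable dense subset. Then every nonnegative function f : D → ℝ that is 1-Lipschitz and bounded by 1 is the pointwise supremum of the countable family of functions of the form x ↦ q·max(1 − p·d(x,s), 0) with s ∈ S, p, q nonnegative rationals, q ≤ 1, pq ≤ 1, that lie pointwise below f. -/
/-- On a separable metric space with countable dense subset `S`, every
nonnegative `1`-Lipschitz function `f` bounded by `1` is the pointwise supremum
of the functions `x ↦ q·max(1 − p·d(x,s), 0)` (with `s ∈ S`, `p, q ≥ 0`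
rational, `q ≤ 1`, `p·q ≤ 1`) that lie pointwise below `f`. -/
theorem stmt3 {D : Type*} [MetricSpace D] (S : Set D) (hSc : S.Countable)
    (hSd : Dense S) (f : D → ℝ) (hf0 : ∀ x, 0 ≤ f x) (hf1 : ∀ x, f x ≤ 1)
    (hlip : LipschitzWith 1 f) (x : D) :
    f x = sSup {y : ℝ | ∃ (s : D) (p q : ℚ), s ∈ S ∧ 0 ≤ p ∧ 0 ≤ q ∧ q ≤ 1 ∧
      p * q ≤ 1 ∧ (∀ z, (q : ℝ) * max (1 - (p : ℝ) * dist z s) 0 ≤ f z) ∧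
      y = (q : ℝ) * max (1 - (p : ℝ) * dist x s) 0} := by
  set A := {y : ℝ | ∃ (s : D) (p q : ℚ), s ∈ S ∧ 0 ≤ p ∧ 0 ≤ q ∧ q ≤ 1 ∧
      p * q ≤ 1 ∧ (∀ z, (q : ℝ) * max (1 - (p : ℝ) * dist z s) 0 ≤ f z) ∧
      y = (q : ℝ) * max (1 - (p : ℝ) * dist x s) 0} with hA
  have hub : ∀ y ∈ A, y ≤ f x := by
    rintro y ⟨s, p, q, _, _, _, _, _, hle, rfl⟩
    exact hle x
  have hbdd : BddAbove A := ⟨f x, hub⟩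
  -- 0 ∈ A
  obtain ⟨s₀, hs₀S, _⟩ := Metric.mem_closure_iff.mp (hSd x) 1 one_pos
  have h0mem : (0 : ℝ) ∈ A := by
    refine ⟨s₀, 0, 0, hs₀S, le_refl _, le_refl _, by norm_num, by norm_num, ?_, by push_cast; ring⟩
    intro z
    push_cast
    simpa using hf0 z
  have hle1 : sSup A ≤ f x := Real.sSup_le hub (hf0 x)
  have hge : ∀ ε : ℝ, 0 < ε → f x - ε ≤ sSup A := by
    intro ε hε
    rcases le_or_gt (f x) ε with hcase | hcase
    · have : (0:ℝ) ≤ sSup A := le_csSup hbdd h0mem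
      linarith
    · -- pick s near x, q rational in (f x - 2ε/3, f x - ε/3)
      obtain ⟨s, hsS, hds⟩ := Metric.mem_closure_iff.mp (hSd x) (ε/3) (by linarith)
      obtain ⟨q, hq1, hq2⟩ := exists_rat_btwn (show f x - 2*ε/3 < f x - ε/3 by linarith)
      have hqpos : (0:ℝ) < q := by linarith
      have hqpos' : (0:ℚ) < q := by exact_mod_cast hqpos
      have hq0 : (0:ℚ) ≤ q := le_of_lt hqpos'
      have hqle1 : q ≤ 1 := by
        have : (q:ℝ) ≤ 1 := by have := hf1 x; linarith
        exact_mod_cast this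
      have hpq : q⁻¹ * q = 1 := inv_mul_cancel₀ (ne_of_gt hqpos')
      have hpcast : ((q⁻¹ : ℚ) : ℝ) = (q:ℝ)⁻¹ := by push_cast; ring
      have key : ∀ z, ((q:ℝ)) * max (1 - ((q⁻¹:ℚ):ℝ) * dist z s) 0 ≤ f z := by
        intro z
        rw [hpcast]
        have hmul : (q:ℝ) * max (1 - (q:ℝ)⁻¹ * dist z s) 0
            = max ((q:ℝ) - dist z s) 0 := by
          rw [mul_max_of_nonneg _ _ (le_of_lt hqpos), mul_zero]
          congr 1
          field_simp
        rw [hmul]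
        refine max_le ?_ (hf0 z)
        have hlipz : f x - f z ≤ dist x z := by
          have h := hlip.dist_le_mul x z
          simp only [NNReal.coe_one, one_mul] at h
          have := le_trans (le_abs_self _) (by rwa [Real.dist_eq] at h)
          linarith
        have htri : dist x z ≤ dist x s + dist s z := dist_triangle x s z
        have : dist z s = dist s z := dist_comm z s
        linarith [dist_comm x z, dist_comm z x]
      have hmem : ((q:ℝ)) * max (1 - ((q⁻¹:ℚ):ℝ) * dist x s) 0 ∈ A :=
        ⟨s, q⁻¹, q, hsS, inv_nonneg.mpr hq0, hq0, hqle1, le_of_eq hpq, key, rfl⟩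
      have hval : f x - ε ≤ (q:ℝ) * max (1 - ((q⁻¹:ℚ):ℝ) * dist x s) 0 := by
        rw [hpcast]
        have hmul : (q:ℝ) * max (1 - (q:ℝ)⁻¹ * dist x s) 0
            = max ((q:ℝ) - dist x s) 0 := by
          rw [mul_max_of_nonneg _ _ (le_of_lt hqpos), mul_zero]
          congr 1
          field_simp
        rw [hmul]
        have : (q:ℝ) - dist x s ≤ max ((q:ℝ) - dist x s) 0 := le_max_left _ _
        linarith
      exact le_trans hval (le_csSup hbdd hmem)
  have : f x ≤ sSup A := by
    by_contra h
    push_neg at h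
    obtain ⟨ε, hε, hε'⟩ : ∃ ε : ℝ, 0 < ε ∧ sSup A < f x - ε :=
      ⟨(f x - sSup A)/2, by linarith, by linarith⟩
    exact absurd (hge ε hε) (not_le.mpr hε')
  linarith
end

section
/- Let D be a separable metric space, and for each n let X_n be a random variable and S_n^(1), S_n^(2) be D-valued bootstrap replicates, identically distributed and independent conditionally on X_n, with regular conditional distribution Pr^{S_n^(1)|X_n}. Let Q be a fixed Borel probability measure on D. If the joint law of (S_n^(1), S_n^(2)) converges weakly to Q ⊗ Q, then for every bounded Lipschitz function f : D → ℝ, the conditional expectation E[f(S_n^(1)) | X_n] converges to ∫ f dQ in L², and hence in probability. -/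
open MeasureTheory ProbabilityTheory Filter Topology BoundedContinuousFunction

/-- `S 1, …, S M` are identically distributed and independent conditionally on
`X`, with common regular conditional distribution `κ (X ·)` given `X`:
conditionally on `X`, the `S i` are i.i.d. with law `κ (X ·)`. This is encoded
by testing against bounded measurable functions of `X` and of the `S i`. -/
def CondIID {Ω 𝒳 D : Type*} [MeasurableSpace Ω] [MeasurableSpace 𝒳]
    [MeasurableSpace D] (Pr : Measure Ω) (X : Ω → 𝒳) {M : ℕ}
    (S : Fin M → Ω → D) (κ : Kernel 𝒳 D) : Prop :=
  ∀ (φ : 𝒳 → ℝ) (ψ : Fin M → D → ℝ), Measurable φ → (∀ x, |φ x| ≤ 1) →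
    (∀ i, Measurable (ψ i)) → (∀ i x, |ψ i x| ≤ 1) →
    ∫ ω, φ (X ω) * ∏ i, ψ i (S i ω) ∂Pr
      = ∫ ω, φ (X ω) * ∏ i, ∫ x, ψ i x ∂(κ (X ω)) ∂Pr

/-- If the joint law of two bootstrap replicates `(S n 0, S n 1)`, identically
distributed and conditionally independent given the data `X n` with regular
conditional distribution `κ n (X n ·)`, converges weakly to `Q ⊗ Q`, then for
every bounded Lipschitz `f : D → ℝ` the conditional expectation
`E[f(S n 0) | X n] = ∫ f dκ n (X n ·)` converges to `∫ f dQ` in `L²` and hence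
in probability. -/
theorem stmt6 {Ω 𝒳 D : Type*} [MeasurableSpace Ω] [MeasurableSpace 𝒳]
    [MetricSpace D] [MeasurableSpace D] [BorelSpace D]
    [TopologicalSpace.SeparableSpace D]
    (Pr : Measure Ω) [IsProbabilityMeasure Pr]
    (X : ℕ → Ω → 𝒳) (hX : ∀ n, Measurable (X n))
    (S : ℕ → Fin 2 → Ω → D) (hS : ∀ n i, Measurable (S n i))
    (κ : ℕ → Kernel 𝒳 D) (hκ : ∀ n, IsMarkovKernel (κ n))
    (hcond : ∀ n, CondIID Pr (X n) (S n) (κ n))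
    (Q : Measure D) [IsProbabilityMeasure Q]
    (hweak : ∀ g : (D × D) →ᵇ ℝ,
      Tendsto (fun n => ∫ ω, g (S n 0 ω, S n 1 ω) ∂Pr) atTop
        (𝓝 (∫ p, g p ∂(Q.prod Q))))
    (f : D → ℝ) (C : ℝ) (L : NNReal) (hfb : ∀ x, |f x| ≤ C)
    (hfl : LipschitzWith L f) :
    Tendsto (fun n =>
        ∫ ω, (∫ x, f x ∂(κ n (X n ω)) - ∫ x, f x ∂Q) ^ 2 ∂Pr) atTop (𝓝 0) ∧
      TendstoInMeasure Pr (fun n ω => ∫ x, f x ∂(κ n (X n ω))) atTop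
        (fun _ => ∫ x, f x ∂Q) := by
  haveI := hκ
  set c : ℝ := ∫ x, f x ∂Q with hc
  set C' : ℝ := max C 1 with hC'
  have hC'pos : 0 < C' := lt_of_lt_of_le one_pos (le_max_right _ _)
  have hfC' : ∀ x, |f x| ≤ C' := fun x => (hfb x).trans (le_max_left _ _)
  have hfmeas : Measurable f := hfl.continuous.measurable
  -- the conditional expectation functions
  set T : ℕ → Ω → ℝ := fun n ω => ∫ x, f x ∂(κ n (X n ω)) with hTdef
  have hTmeas : ∀ n, Measurable (T n) := by
    intro n
    have h1 : StronglyMeasurable (fun p : 𝒳 × D => f p.2) :=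
      (hfmeas.comp measurable_snd).stronglyMeasurable
    have h2 : StronglyMeasurable fun x : 𝒳 => ∫ y, f y ∂(κ n x) :=
      h1.integral_kernel_prod_right'
    exact h2.measurable.comp (hX n)
  have hTbd : ∀ n ω, |T n ω| ≤ C' := by
    intro n ω
    have : ‖∫ x, f x ∂(κ n (X n ω))‖ ≤ C' * ((κ n (X n ω)) Set.univ).toReal :=
      norm_integral_le_of_norm_le_const (Eventually.of_forall fun x => by
        simpa [Real.norm_eq_abs] using hfC' x)
    simpa [Real.norm_eq_abs] using this
  have hTint : ∀ n, Integrable (T n) Pr := by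
    intro n
    refine ⟨(hTmeas n).aestronglyMeasurable, ?_⟩
    exact HasFiniteIntegral.of_bounded (C := C')
      (Eventually.of_forall fun ω => by simpa [Real.norm_eq_abs] using hTbd n ω)
  have hT2int : ∀ n, Integrable (fun ω => (T n ω) ^ 2) Pr := by
    intro n
    refine ⟨((hTmeas n).pow_const 2).aestronglyMeasurable, ?_⟩
    refine HasFiniteIntegral.of_bounded (C := C' ^ 2)
      (Eventually.of_forall fun ω => ?_)
    have := hTbd n ω
    calc ‖(T n ω) ^ 2‖ = |T n ω| ^ 2 := by
          rw [Real.norm_eq_abs, abs_pow]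
      _ ≤ C' ^ 2 := pow_le_pow_left₀ (abs_nonneg _) this 2
  -- the normalized test function
  set g : D → ℝ := fun x => C'⁻¹ * f x with hgdef
  have hgmeas : Measurable g := hfmeas.const_mul _
  have hgbd : ∀ x, |g x| ≤ 1 := by
    intro x
    rw [hgdef, abs_mul, abs_of_pos (inv_pos.mpr hC'pos)]
    calc C'⁻¹ * |f x| ≤ C'⁻¹ * C' := by
          exact mul_le_mul_of_nonneg_left (hfC' x) (inv_pos.mpr hC'pos).le
      _ = 1 := inv_mul_cancel₀ hC'pos.ne'
  have hCC0 : (C'⁻¹ * C'⁻¹ : ℝ) ≠ 0 :=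
    mul_ne_zero (inv_ne_zero hC'pos.ne') (inv_ne_zero hC'pos.ne')
  -- second moment identity
  have hA : ∀ n, ∫ ω, f (S n 0 ω) * f (S n 1 ω) ∂Pr = ∫ ω, (T n ω) ^ 2 ∂Pr := by
    intro n
    have h := hcond n (fun _ => 1) (fun _ => g) measurable_const
      (fun _ => by norm_num) (fun _ => hgmeas) (fun _ x => hgbd x)
    simp only [one_mul, Fin.prod_univ_two] at h
    have e1 : ∀ ω, g (S n 0 ω) * g (S n 1 ω)
        = (C'⁻¹ * C'⁻¹) * (f (S n 0 ω) * f (S n 1 ω)) := by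
      intro ω; simp only [hgdef]; ring
    have e2 : ∀ ω, (∫ x, g x ∂(κ n (X n ω))) * (∫ x, g x ∂(κ n (X n ω)))
        = (C'⁻¹ * C'⁻¹) * ((T n ω) ^ 2) := by
      intro ω
      simp only [hgdef, integral_const_mul, hTdef]
      ring
    simp_rw [e1, e2, integral_const_mul] at h
    exact mul_left_cancel₀ hCC0 h
  -- first moment identity
  have hB : ∀ n, ∫ ω, f (S n 0 ω) ∂Pr = ∫ ω, T n ω ∂Pr := by
    intro n
    have h := hcond n (fun _ => 1) ![g, fun _ => 1] measurable_const
      (fun _ => by norm_num)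
      (fun i => by fin_cases i <;> simp [hgmeas, measurable_const])
      (fun i x => by fin_cases i <;> simp [hgbd x])
    simp only [one_mul, Fin.prod_univ_two, Matrix.cons_val_zero, Matrix.cons_val_one,
      Matrix.head_cons, integral_const, measure_univ, probReal_univ, smul_eq_mul,
      mul_one] at h
    have e1 : ∀ ω, g (S n 0 ω) = C'⁻¹ * f (S n 0 ω) := fun ω => rfl
    have e2 : ∀ ω, (∫ x, g x ∂(κ n (X n ω))) = C'⁻¹ * T n ω := by
      intro ω; simp only [hgdef, integral_const_mul, hTdef]
    simp_rw [e1, e2, integral_const_mul] at h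
    exact mul_left_cancel₀ (inv_ne_zero hC'pos.ne') h
  -- bounded continuous test functions for the weak convergence
  let F : D →ᵇ ℝ := BoundedContinuousFunction.ofNormedAddCommGroup f hfl.continuous C'
    (fun x => by simpa [Real.norm_eq_abs] using hfC' x)
  let G1 : (D × D) →ᵇ ℝ :=
    (F.compContinuous ⟨Prod.fst, continuous_fst⟩) *
      (F.compContinuous ⟨Prod.snd, continuous_snd⟩)
  let G2 : (D × D) →ᵇ ℝ := F.compContinuous ⟨Prod.fst, continuous_fst⟩
  have hG1app : ∀ p : D × D, G1 p = f p.1 * f p.2 := fun p => rfl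
  have hG2app : ∀ p : D × D, G2 p = f p.1 := fun p => rfl
  have hw1 : Tendsto (fun n => ∫ ω, f (S n 0 ω) * f (S n 1 ω) ∂Pr) atTop (𝓝 (c * c)) := by
    have := hweak G1
    have hint : ∫ p, G1 p ∂(Q.prod Q) = c * c := by
      simp_rw [hG1app]
      exact integral_prod_mul f f
    rw [hint] at this
    simpa only [hG1app] using this
  have hw2 : Tendsto (fun n => ∫ ω, f (S n 0 ω) ∂Pr) atTop (𝓝 c) := by
    have := hweak G2
    have hint : ∫ p, G2 p ∂(Q.prod Q) = c := by
      simp_rw [hG2app]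
      have : ∫ p : D × D, f p.1 * 1 ∂(Q.prod Q) = (∫ x, f x ∂Q) * ∫ _x, (1:ℝ) ∂Q :=
        integral_prod_mul f (fun _ => (1:ℝ))
      simpa using this
    rw [hint] at this
    simpa only [hG2app] using this
  -- expand the square
  have key : ∀ n, ∫ ω, (T n ω - c) ^ 2 ∂Pr
      = (∫ ω, f (S n 0 ω) * f (S n 1 ω) ∂Pr) - 2 * c * (∫ ω, f (S n 0 ω) ∂Pr) + c ^ 2 := by
    intro n
    have e1 : (fun ω => (T n ω - c) ^ 2)
        = fun ω => ((T n ω) ^ 2 - 2 * c * T n ω) + c ^ 2 := by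
      funext ω; ring
    have i1 : Integrable (fun ω => (T n ω) ^ 2 - 2 * c * T n ω) Pr :=
      (hT2int n).sub ((hTint n).const_mul _)
    have i2 : Integrable (fun ω => 2 * c * T n ω) Pr := (hTint n).const_mul _
    rw [e1, integral_add i1 (integrable_const _),
      integral_sub (hT2int n) i2, integral_const_mul, integral_const,
      probReal_univ, smul_eq_mul, one_mul, hA n, hB n]
  have hL2 : Tendsto (fun n => ∫ ω, (T n ω - c) ^ 2 ∂Pr) atTop (𝓝 0) := by
    have : Tendsto (fun n =>
        (∫ ω, f (S n 0 ω) * f (S n 1 ω) ∂Pr) - 2 * c * (∫ ω, f (S n 0 ω) ∂Pr) + c ^ 2)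
        atTop (𝓝 (c * c - 2 * c * c + c ^ 2)) :=
      (hw1.sub (hw2.const_mul (2 * c))).add_const _
    have h0 : c * c - 2 * c * c + c ^ 2 = 0 := by ring
    rw [h0] at this
    simpa only [key] using this
  refine ⟨hL2, ?_⟩
  -- convergence in probability via Chebyshev
  rw [tendstoInMeasure_iff_dist]
  intro ε hε
  have hbound : ∀ n, Pr {ω | ε ≤ dist (T n ω) c}
      ≤ ENNReal.ofReal ((∫ ω, (T n ω - c) ^ 2 ∂Pr) / ε ^ 2) := by
    intro n
    have hsub : {ω | ε ≤ dist (T n ω) c} ⊆ {ω | ε ^ 2 ≤ (T n ω - c) ^ 2} := by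
      intro ω hω
      simp only [Set.mem_setOf_eq, Real.dist_eq] at hω ⊢
      calc ε ^ 2 ≤ |T n ω - c| ^ 2 := pow_le_pow_left₀ hε.le hω 2
        _ = (T n ω - c) ^ 2 := sq_abs _
    have hint2 : Integrable (fun ω => (T n ω - c) ^ 2) Pr := by
      have e1 : (fun ω => (T n ω - c) ^ 2)
          = fun ω => ((T n ω) ^ 2 - 2 * c * T n ω) + c ^ 2 := by
        funext ω; ring
      rw [e1]
      have i1 : Integrable (fun ω => (T n ω) ^ 2 - 2 * c * T n ω) Pr :=
        (hT2int n).sub ((hTint n).const_mul _)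
      exact i1.add (integrable_const _)
    have hcheb := mul_meas_ge_le_integral_of_nonneg (μ := Pr)
      (f := fun ω => (T n ω - c) ^ 2)
      (Eventually.of_forall fun ω => sq_nonneg _) hint2 (ε ^ 2)
    have hε2 : (0:ℝ) < ε ^ 2 := by positivity
    have h1 : (Pr {ω | ε ^ 2 ≤ (T n ω - c) ^ 2}).toReal
        ≤ (∫ ω, (T n ω - c) ^ 2 ∂Pr) / ε ^ 2 := by
      rw [le_div_iff₀ hε2]
      simp only [measureReal_def] at hcheb; linarith [hcheb]
    calc Pr {ω | ε ≤ dist (T n ω) c} ≤ Pr {ω | ε ^ 2 ≤ (T n ω - c) ^ 2} :=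
          measure_mono hsub
      _ = ENNReal.ofReal ((Pr {ω | ε ^ 2 ≤ (T n ω - c) ^ 2}).toReal) :=
          (ENNReal.ofReal_toReal (measure_ne_top _ _)).symm
      _ ≤ ENNReal.ofReal ((∫ ω, (T n ω - c) ^ 2 ∂Pr) / ε ^ 2) :=
          ENNReal.ofReal_le_ofReal h1
  have hbtend : Tendsto (fun n => ENNReal.ofReal ((∫ ω, (T n ω - c) ^ 2 ∂Pr) / ε ^ 2))
      atTop (𝓝 0) := by
    have h1 : Tendsto (fun n => (∫ ω, (T n ω - c) ^ 2 ∂Pr) / ε ^ 2) atTop (𝓝 0) := by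
      have := hL2.div_const (ε ^ 2)
      simpa using this
    have := (ENNReal.continuous_ofReal.tendsto 0).comp h1
    rwa [ENNReal.ofReal_zero] at this
  exact tendsto_of_tendsto_of_tendsto_of_le_of_le tendsto_const_nhds hbtend
    (fun n => zero_le) hbound
end

section
/- Let D be a separable metric space and suppose S_n = S_n(X_n) converges weakly to a random variable S in D, and that S_n^(1), S_n^(2) are bootstrap replicates identically distributed and conditionally independent given X_n. If the joint law of (S_n, S_n^(1), S_n^(2)) converges weakly to the product Pr^S ⊗ Pr^S ⊗ Pr^S, then d_BL(Pr^{S_n^(1)|X_n}, Pr^{S_n}) → 0 in probability. -/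
open MeasureTheory ProbabilityTheory Filter Topology BoundedContinuousFunction
open scoped ENNReal NNReal

/-- The bounded Lipschitz distance between two measures. -/
noncomputable def dBL {D : Type*} [MeasurableSpace D] [PseudoMetricSpace D]
    (P Q : Measure D) : ℝ :=
  ⨆ h : {h : D → ℝ // (∀ x, |h x| ≤ 1) ∧ LipschitzWith 1 h},
    |∫ x, h.1 x ∂P - ∫ x, h.1 x ∂Q|

section Auxiliary

lemma dBL_nonneg {D : Type*} [MeasurableSpace D] [PseudoMetricSpace D]
    (P Q : Measure D) : 0 ≤ dBL P Q :=
  Real.iSup_nonneg (fun _ => abs_nonneg _)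

lemma dBL_le {D : Type*} [MeasurableSpace D] [PseudoMetricSpace D]
    {P Q : Measure D} {B : ℝ}
    (hB : ∀ h : D → ℝ, (∀ x, |h x| ≤ 1) → LipschitzWith 1 h →
      |∫ x, h x ∂P - ∫ x, h x ∂Q| ≤ B) : dBL P Q ≤ B := by
  haveI : Nonempty {h : D → ℝ // (∀ x, |h x| ≤ 1) ∧ LipschitzWith 1 h} :=
    ⟨⟨fun _ => 0, fun x => by simp, (LipschitzWith.const 0).weaken zero_le_one⟩⟩
  exact ciSup_le (fun h => hB h.1 h.2.1 h.2.2)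

lemma integrable_bd {α : Type*} [MeasurableSpace α] (μ : MeasureTheory.Measure α)
    [MeasureTheory.IsFiniteMeasure μ] {f : α → ℝ} (hf : Measurable f)
    (hb : ∀ x, |f x| ≤ 1) : MeasureTheory.Integrable f μ :=
  (MeasureTheory.integrable_const (1:ℝ)).mono' hf.aestronglyMeasurable
    (Filter.Eventually.of_forall (fun x => by rw [Real.norm_eq_abs]; exact hb x))

lemma net_lemma {D : Type*} [MetricSpace D] {A : Set D} (hA : TotallyBounded A)
    (hAne : A.Nonempty) {ε : ℝ} (hε : 0 < ε) :
    ∃ G : Set (D → ℝ), G.Finite ∧ G.Nonempty ∧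
      (∀ g ∈ G, (∀ x, |g x| ≤ 1) ∧ LipschitzWith 1 g) ∧
      ∀ h : D → ℝ, (∀ x, |h x| ≤ 1) → LipschitzWith 1 h →
        ∃ g ∈ G, ∀ a ∈ A, |h a - g a| ≤ ε := by
  have hε3 : 0 < ε / 3 := by linarith
  obtain ⟨t, htfin, hcover⟩ := (Metric.totallyBounded_iff.mp hA) (ε / 3) hε3
  haveI : Fintype t := htfin.fintype
  have htne : t.Nonempty := by
    obtain ⟨a, ha⟩ := hAne
    have := hcover ha
    simp only [Set.mem_iUnion] at this
    obtain ⟨y, hy, _⟩ := this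
    exact ⟨y, hy⟩
  haveI : Nonempty t := htne.to_subtype
  set N := Fintype.card t with hN
  haveI hNpos : Nonempty (Fin N) := by
    rw [hN]
    exact Fin.pos_iff_nonempty.mp Fintype.card_pos
  set p : Fin N → D := fun i => ((Fintype.equivFin t).symm i : D) with hp
  set M : ℕ := ⌈2 / (ε / 3)⌉₊ + 1 with hM
  set V : Finset ℝ := Finset.image (fun j : ℕ => -1 + (j : ℝ) * (ε / 3)) (Finset.range M)
    with hV
  set F : (Fin N → ℝ) → D → ℝ :=
    fun v x => Finset.univ.inf' Finset.univ_nonempty (fun i => v i + dist x (p i)) with hF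
  set g : (Fin N → ℝ) → D → ℝ := fun v x => max (-1) (min (F v x) 1) with hg
  set Sv : Set (Fin N → ℝ) := Set.pi Set.univ (fun _ => (V : Set ℝ)) with hSv
  have hSvfin : Sv.Finite := Set.Finite.pi (fun _ => V.finite_toSet)
  have hSvne : Sv.Nonempty := by
    refine ⟨fun _ => -1 + (0 : ℕ) * (ε / 3), fun i _ => ?_⟩
    simp only [hV, Finset.coe_image, Set.mem_image, Finset.mem_coe, Finset.mem_range]
    exact ⟨0, by omega, by norm_num⟩
  refine ⟨g '' Sv, hSvfin.image _, hSvne.image _, ?_, ?_⟩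
  · rintro _ ⟨v, -, rfl⟩
    constructor
    · intro x
      rw [abs_le]
      exact ⟨le_max_left _ _, max_le (by norm_num) (min_le_right _ _)⟩
    · rw [lipschitzWith_iff_dist_le_mul]
      intro x y
      simp only [Real.dist_eq, NNReal.coe_one, one_mul]
      have hFlip : |F v x - F v y| ≤ dist x y := by
        rw [abs_sub_le_iff]
        constructor
        · have hle : F v x - dist x y ≤ F v y := by
            refine Finset.le_inf' _ _ (fun i _ => ?_)
            have h1 : F v x ≤ v i + dist x (p i) := Finset.inf'_le _ (Finset.mem_univ i)
            have h2 : dist x (p i) ≤ dist x y + dist y (p i) := dist_triangle _ _ _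
            linarith
          linarith
        · have hle : F v y - dist x y ≤ F v x := by
            refine Finset.le_inf' _ _ (fun i _ => ?_)
            have h1 : F v y ≤ v i + dist y (p i) := Finset.inf'_le _ (Finset.mem_univ i)
            have h2 : dist y (p i) ≤ dist y x + dist x (p i) := dist_triangle _ _ _
            rw [dist_comm y x] at h2
            linarith
          linarith
      calc |g v x - g v y| = |max (min (F v x) 1) (-1) - max (min (F v y) 1) (-1)| := by
              simp only [hg]
              rw [max_comm (-1) (min (F v x) 1), max_comm (-1) (min (F v y) 1)]
        _ ≤ |min (F v x) 1 - min (F v y) 1| := abs_max_sub_max_le_abs _ _ _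
        _ ≤ max |F v x - F v y| |(1:ℝ) - 1| := abs_min_sub_min_le_max _ _ _ _
        _ ≤ dist x y := by
              rw [sub_self, abs_zero]
              exact max_le hFlip dist_nonneg
  · intro h hb hlip
    have hval : ∀ i : Fin N, ∃ w : ℝ, w ∈ (V : Set ℝ) ∧ h (p i) ≤ w ∧ w ≤ h (p i) + ε / 3 := by
      intro i
      have hy1 : |h (p i)| ≤ 1 := hb _
      rw [abs_le] at hy1
      refine ⟨-1 + (⌈(h (p i) + 1) / (ε / 3)⌉₊ : ℝ) * (ε / 3), ?_, ?_, ?_⟩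
      · simp only [hV, Finset.coe_image, Set.mem_image, Finset.mem_coe, Finset.mem_range]
        refine ⟨⌈(h (p i) + 1) / (ε / 3)⌉₊, ?_, rfl⟩
        have h2 : ⌈(h (p i) + 1) / (ε / 3)⌉₊ ≤ ⌈2 / (ε / 3)⌉₊ :=
          Nat.ceil_le_ceil ((div_le_div_iff_of_pos_right hε3).mpr (by linarith))
        omega
      · have h3 := Nat.le_ceil ((h (p i) + 1) / (ε / 3))
        rw [div_le_iff₀ hε3] at h3
        linarith
      · have hnn : 0 ≤ (h (p i) + 1) / (ε / 3) := by
          apply div_nonneg (by linarith) (le_of_lt hε3)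
        have h4 := Nat.ceil_lt_add_one hnn
        have h5 : (⌈(h (p i) + 1) / (ε / 3)⌉₊ : ℝ) * (ε / 3)
            < ((h (p i) + 1) / (ε / 3) + 1) * (ε / 3) := mul_lt_mul_of_pos_right h4 hε3
        rw [add_mul, div_mul_cancel₀ _ (ne_of_gt hε3)] at h5
        linarith
    choose v hvV hvlo hvhi using hval
    have hvS : v ∈ Sv := fun i _ => hvV i
    refine ⟨g v, Set.mem_image_of_mem _ hvS, ?_⟩
    intro a ha
    have hlow : ∀ x, h x ≤ F v x := by
      intro x
      refine Finset.le_inf' _ _ (fun i _ => ?_)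
      have hd := hlip.dist_le_mul x (p i)
      rw [NNReal.coe_one, one_mul, Real.dist_eq] at hd
      have : h x - h (p i) ≤ dist x (p i) := le_trans (le_abs_self _) hd
      linarith [hvlo i]
    have hup : F v a ≤ h a + ε := by
      have hmem := hcover ha
      simp only [Set.mem_iUnion] at hmem
      obtain ⟨y, hyt, hy⟩ := hmem
      obtain ⟨i, hi⟩ : ∃ i : Fin N, p i = y := by
        refine ⟨Fintype.equivFin t ⟨y, hyt⟩, ?_⟩
        simp [hp]
      have hdy : dist a (p i) < ε / 3 := by
        rw [hi]
        exact Metric.mem_ball.mp hy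
      have h1 : F v a ≤ v i + dist a (p i) := Finset.inf'_le _ (Finset.mem_univ i)
      have h2 : v i ≤ h (p i) + ε / 3 := hvhi i
      have h3 : h (p i) - h a ≤ dist a (p i) := by
        have hd := hlip.dist_le_mul (p i) a
        rw [NNReal.coe_one, one_mul, Real.dist_eq] at hd
        calc h (p i) - h a ≤ |h (p i) - h a| := le_abs_self _
          _ ≤ dist (p i) a := hd
          _ = dist a (p i) := dist_comm _ _
      linarith
    have hha : |h a| ≤ 1 := hb a
    rw [abs_le] at hha
    have hmin : h a ≤ min (F v a) 1 := le_min (hlow a) hha.2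
    have hga : g v a = min (F v a) 1 := by
      simp only [hg]
      exact max_eq_right (le_trans hha.1 hmin)
    have e1 : h a ≤ g v a := by rw [hga]; exact hmin
    have e2 : g v a ≤ h a + ε := by
      rw [hga]
      exact le_trans (min_le_left _ _) hup
    rw [abs_sub_comm, abs_le]
    constructor <;> linarith

lemma pretight {D : Type*} [MetricSpace D] [TopologicalSpace.SeparableSpace D]
    [MeasurableSpace D] [OpensMeasurableSpace D]
    (μ : Measure D) [IsProbabilityMeasure μ] {c : ℝ≥0∞} (hc : 0 < c) :
    ∃ A : Set D, IsClosed A ∧ TotallyBounded A ∧ μ Aᶜ ≤ c := by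
  haveI : Nonempty D := by
    by_contra hD
    rw [not_nonempty_iff] at hD
    have h1 : μ Set.univ = 1 := measure_univ
    rw [Set.univ_eq_empty_iff.mpr hD, measure_empty] at h1
    exact zero_ne_one h1
  set u : ℕ → D := TopologicalSpace.denseSeq D with hu
  have hdense : DenseRange u := TopologicalSpace.denseRange_denseSeq D
  set B : ℕ → ℕ → Set D :=
    fun k N => ⋃ j ∈ Finset.range N, Metric.closedBall (u j) (1 / (k + 1) : ℝ) with hB
  have hBclosed : ∀ k N, IsClosed (B k N) := by
    intro k N
    exact Set.Finite.isClosed_biUnion (Finset.range N).finite_toSet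
      (fun j _ => Metric.isClosed_closedBall)
  have hBmono : ∀ k, Monotone (B k) := by
    intro k N1 N2 hN x hx
    simp only [hB, Set.mem_iUnion, Finset.mem_range, exists_prop] at hx ⊢
    obtain ⟨j, hj, hxj⟩ := hx
    exact ⟨j, by omega, hxj⟩
  have hBunion : ∀ k, (⋃ N, B k N) = Set.univ := by
    intro k
    rw [Set.eq_univ_iff_forall]
    intro x
    have hr : (0 : ℝ) < 1 / (k + 1) := by positivity
    obtain ⟨j, hj⟩ := Metric.denseRange_iff.mp hdense x (1 / (k + 1)) hr
    refine Set.mem_iUnion.mpr ⟨j + 1, ?_⟩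
    simp only [hB]
    exact Set.mem_biUnion (Finset.self_mem_range_succ j) (Metric.mem_closedBall.mpr hj.le)
  have hδ : ∀ k : ℕ, (0 : ℝ≥0∞) < c * 2⁻¹ ^ (k + 1) := by
    intro k
    apply ENNReal.mul_pos hc.ne'
    simp
  have hNk : ∀ k : ℕ, ∃ Nk, μ (B k Nk)ᶜ ≤ c * 2⁻¹ ^ (k + 1) := by
    intro k
    have htend := tendsto_measure_iUnion_atTop (μ := μ) (hBmono k)
    rw [hBunion k, measure_univ] at htend
    have hlt : 1 - c * 2⁻¹ ^ (k + 1) < 1 :=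
      ENNReal.sub_lt_self ENNReal.one_ne_top one_ne_zero (hδ k).ne'
    obtain ⟨N, hN⟩ := (htend.eventually_const_le hlt).exists
    have hN' : 1 - c * 2⁻¹ ^ (k + 1) ≤ μ (B k N) := hN
    refine ⟨N, ?_⟩
    rw [prob_compl_eq_one_sub (hBclosed k N).measurableSet]
    rw [tsub_le_iff_right]
    calc (1 : ℝ≥0∞) ≤ (1 - c * 2⁻¹ ^ (k + 1)) + c * 2⁻¹ ^ (k + 1) := le_tsub_add
      _ ≤ μ (B k N) + c * 2⁻¹ ^ (k + 1) := add_le_add_left hN' _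
      _ = c * 2⁻¹ ^ (k + 1) + μ (B k N) := add_comm _ _
  choose Nk hNkle using hNk
  refine ⟨⋂ k, B k (Nk k), isClosed_iInter (fun k => hBclosed k (Nk k)), ?_, ?_⟩
  · rw [Metric.totallyBounded_iff]
    intro ε hε
    obtain ⟨k, hk⟩ := exists_nat_one_div_lt hε
    refine ⟨u '' (Set.Iio (Nk k)), (Set.finite_Iio _).image _, ?_⟩
    intro x hx
    have hx' : x ∈ B k (Nk k) := Set.mem_iInter.mp hx k
    simp only [hB, Set.mem_iUnion, Finset.mem_range] at hx'
    obtain ⟨j, hj, hxj⟩ := hx'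
    refine Set.mem_biUnion ⟨j, hj, rfl⟩ ?_
    rw [Metric.mem_ball]
    exact lt_of_le_of_lt (Metric.mem_closedBall.mp hxj) hk
  · rw [Set.compl_iInter]
    refine le_trans (measure_iUnion_le _) ?_
    refine le_trans (ENNReal.tsum_le_tsum (fun k => hNkle k)) ?_
    rw [ENNReal.tsum_mul_left]
    have hsum : ∑' k : ℕ, (2⁻¹ : ℝ≥0∞) ^ (k + 1) = 1 := by
      have hps : ∀ k : ℕ, (2⁻¹ : ℝ≥0∞) ^ (k + 1) = 2⁻¹ ^ k * 2⁻¹ := fun k => pow_succ _ _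
      simp_rw [hps]
      rw [ENNReal.tsum_mul_right, ENNReal.tsum_geometric, ENNReal.one_sub_inv_two, inv_inv]
      exact ENNReal.mul_inv_cancel (by norm_num) (by norm_num)
    rw [hsum, mul_one]

end Auxiliary

/-- If `S_n ⇝ S` and the joint law of `(S_n, S_n^{(1)}, S_n^{(2)})` converges
weakly to `Pr^S ⊗ Pr^S ⊗ Pr^S`, where the bootstrap replicates `S_n^{(1)},
S_n^{(2)}` are identically distributed and conditionally independent given the
data `X_n` with regular conditional distribution `κ n (X n ·)`, then
`d_BL(Pr^{S_n^{(1)} | X_n}, Pr^{S_n}) → 0` in probability. -/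
theorem stmt10 {Ω 𝒳 D : Type*} [MeasurableSpace Ω] [MeasurableSpace 𝒳]
    [MetricSpace D] [MeasurableSpace D] [BorelSpace D]
    [TopologicalSpace.SeparableSpace D]
    (Pr : Measure Ω) [IsProbabilityMeasure Pr]
    (X : ℕ → Ω → 𝒳) (hX : ∀ n, Measurable (X n))
    (Sn : ℕ → Ω → D) (hSn : ∀ n, Measurable (Sn n))
    (S : ℕ → Fin 2 → Ω → D) (hS : ∀ n i, Measurable (S n i))
    (κ : ℕ → Kernel 𝒳 D) (hκ : ∀ n, IsMarkovKernel (κ n))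
    (hcond : ∀ n, CondIID Pr (X n) (S n) (κ n))
    (μS : Measure D) [IsProbabilityMeasure μS]
    (hSweak : ∀ f : D →ᵇ ℝ,
      Tendsto (fun n => ∫ ω, f (Sn n ω) ∂Pr) atTop (𝓝 (∫ x, f x ∂μS)))
    (hjoint : ∀ g : (D × D × D) →ᵇ ℝ,
      Tendsto (fun n => ∫ ω, g (Sn n ω, S n 0 ω, S n 1 ω) ∂Pr) atTop
        (𝓝 (∫ p, g p ∂(μS.prod (μS.prod μS))))) :
    TendstoInMeasure Pr
      (fun n ω => dBL (κ n (X n ω)) (Measure.map (Sn n) Pr)) atTop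
      (fun _ => 0) := by
  classical
  haveI : SecondCountableTopology D := UniformSpace.secondCountable_of_separable D
  haveI hκP : ∀ n x, IsProbabilityMeasure (κ n x) := fun n x => (hκ n).isProbabilityMeasure x
  -- measurability of kernel integrals
  have hIm : ∀ n (u : D → ℝ), Measurable u →
      Measurable (fun x => ∫ y, u y ∂(κ n x)) := by
    intro n u hu
    haveI := hκ n
    exact (MeasureTheory.StronglyMeasurable.integral_kernel_prod_right
      (f := fun (_ : 𝒳) (y : D) => u y)
      ((hu.comp measurable_snd).stronglyMeasurable)).measurable
  -- bounds on kernel integrals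
  have hIbd : ∀ n (u : D → ℝ), (∀ x, |u x| ≤ 1) → ∀ x, |∫ y, u y ∂(κ n x)| ≤ 1 := by
    intro n u hub x
    rw [← Real.norm_eq_abs]
    calc ‖∫ y, u y ∂(κ n x)‖ ≤ 1 * ((κ n x) Set.univ).toReal :=
          norm_integral_le_of_norm_le_const
            (Filter.Eventually.of_forall (fun y => by rw [Real.norm_eq_abs]; exact hub y))
      _ = 1 := by simp
  -- conditional second moment identity
  have hcond2 : ∀ n (u v : D → ℝ), Measurable u → (∀ x, |u x| ≤ 1) →
      Measurable v → (∀ x, |v x| ≤ 1) →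
      ∫ ω, u (S n 0 ω) * v (S n 1 ω) ∂Pr
        = ∫ ω, (∫ y, u y ∂(κ n (X n ω))) * (∫ y, v y ∂(κ n (X n ω))) ∂Pr := by
    intro n u v hu hub hv hvb
    have h := hcond n (fun _ => 1) ![u, v] measurable_const (by intro x; norm_num)
      (by intro i; fin_cases i <;> simpa)
      (by intro i x; fin_cases i <;> simp [hub x, hvb x])
    simpa [Fin.prod_univ_two] using h
  -- conditional first moment identity
  have hcond1 : ∀ n (u : D → ℝ), Measurable u → (∀ x, |u x| ≤ 1) →
      ∫ ω, u (S n 0 ω) ∂Pr = ∫ ω, (∫ y, u y ∂(κ n (X n ω))) ∂Pr := by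
    intro n u hu hub
    have h := hcond2 n u (fun _ => 1) hu hub measurable_const (by intro x; norm_num)
    simpa using h
  -- weak convergence of the first bootstrap replicate
  have hm1 : ∀ u : D →ᵇ ℝ,
      Tendsto (fun n => ∫ ω, u (S n 0 ω) ∂Pr) atTop (𝓝 (∫ x, u x ∂μS)) := by
    intro u
    have hg := hjoint (u.compContinuous ⟨fun p : D × D × D => p.2.1, by fun_prop⟩)
    have e1 : ∫ p : D × D × D, u p.2.1 ∂(μS.prod (μS.prod μS)) = ∫ x, u x ∂μS := by
      calc ∫ p : D × D × D, u p.2.1 ∂(μS.prod (μS.prod μS))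
          = ∫ p : D × D × D, (1:ℝ) * u p.2.1 ∂(μS.prod (μS.prod μS)) := by simp
        _ = (∫ _x : D, (1:ℝ) ∂μS) * ∫ q : D × D, u q.1 ∂(μS.prod μS) :=
            MeasureTheory.integral_prod_mul (fun _ : D => (1:ℝ)) (fun q : D × D => u q.1)
        _ = ∫ q : D × D, u q.1 ∂(μS.prod μS) := by simp
        _ = ∫ q : D × D, u q.1 * (1:ℝ) ∂(μS.prod μS) := by simp
        _ = (∫ x, u x ∂μS) * ∫ _y : D, (1:ℝ) ∂μS :=
            MeasureTheory.integral_prod_mul (fun x : D => u x) (fun _ : D => (1:ℝ))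
        _ = ∫ x, u x ∂μS := by simp
    simpa [e1] using hg
  -- weak convergence of the product of the two replicates
  have hm2 : ∀ u : D →ᵇ ℝ,
      Tendsto (fun n => ∫ ω, u (S n 0 ω) * u (S n 1 ω) ∂Pr) atTop
        (𝓝 ((∫ x, u x ∂μS) * (∫ x, u x ∂μS))) := by
    intro u
    have hg := hjoint ((u.compContinuous ⟨fun p : D × D × D => p.2.1, by fun_prop⟩)
      * (u.compContinuous ⟨fun p : D × D × D => p.2.2, by fun_prop⟩))
    have e1 : ∫ p : D × D × D, u p.2.1 * u p.2.2 ∂(μS.prod (μS.prod μS))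
        = (∫ x, u x ∂μS) * (∫ x, u x ∂μS) := by
      calc ∫ p : D × D × D, u p.2.1 * u p.2.2 ∂(μS.prod (μS.prod μS))
          = ∫ p : D × D × D, (1:ℝ) * (u p.2.1 * u p.2.2) ∂(μS.prod (μS.prod μS)) := by simp
        _ = (∫ _x : D, (1:ℝ) ∂μS) * ∫ q : D × D, u q.1 * u q.2 ∂(μS.prod μS) :=
            MeasureTheory.integral_prod_mul (fun _ : D => (1:ℝ))
              (fun q : D × D => u q.1 * u q.2)
        _ = ∫ q : D × D, u q.1 * u q.2 ∂(μS.prod μS) := by simp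
        _ = (∫ x, u x ∂μS) * ∫ x, u x ∂μS :=
            MeasureTheory.integral_prod_mul (fun x : D => u x) (fun x : D => u x)
    simpa [e1] using hg
  -- integrability helper
  have hint : ∀ (f : Ω → ℝ), Measurable f → (∀ ω, |f ω| ≤ 1) → Integrable f Pr := by
    intro f hf hfb
    exact (integrable_const (1:ℝ)).mono' hf.aestronglyMeasurable
      (Filter.Eventually.of_forall (fun ω => by rw [Real.norm_eq_abs]; exact hfb ω))
  -- Step 1 : L² Chebyshev bound for a fixed test function
  have step1 : ∀ (u : D →ᵇ ℝ), (∀ x, |u x| ≤ 1) → ∀ t : ℝ, 0 < t →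
      Tendsto (fun n => Pr {ω | t ≤
          |(∫ y, u y ∂(κ n (X n ω))) - ∫ ω', u (Sn n ω') ∂Pr|}) atTop (𝓝 0) := by
    intro u hub t ht
    set m := ∫ x, u x ∂μS with hm
    set I : ℕ → Ω → ℝ := fun n ω => ∫ y, u y ∂(κ n (X n ω)) with hI
    set cn : ℕ → ℝ := fun n => ∫ ω', u (Sn n ω') ∂Pr with hcn
    have hImeas : ∀ n, Measurable (I n) :=
      fun n => (hIm n u u.continuous.measurable).comp (hX n)
    have hIbd' : ∀ n ω, |I n ω| ≤ 1 := fun n ω => hIbd n u hub (X n ω)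
    have hIint : ∀ n, Integrable (I n) Pr := fun n => hint _ (hImeas n) (hIbd' n)
    have hI2int : ∀ n, Integrable (fun ω => (I n ω)^2) Pr := by
      intro n
      refine hint _ ((hImeas n).pow_const 2) (fun ω => ?_)
      rw [abs_pow]
      calc |I n ω| ^ 2 ≤ 1 ^ 2 := by
            apply pow_le_pow_left₀ (abs_nonneg _) (hIbd' n ω)
        _ = 1 := one_pow 2
    have humeas : Measurable u := u.continuous.measurable
    have hVar : ∀ n, ∫ ω, (I n ω - cn n)^2 ∂Pr
        = (∫ ω, u (S n 0 ω) * u (S n 1 ω) ∂Pr)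
          - 2 * cn n * (∫ ω, u (S n 0 ω) ∂Pr) + (cn n)^2 := by
      intro n
      have hexp : ∀ ω, (I n ω - cn n)^2
          = (I n ω)^2 - (2 * cn n) * I n ω + (cn n)^2 := by intro ω; ring
      have hsq : ∫ ω, u (S n 0 ω) * u (S n 1 ω) ∂Pr = ∫ ω, (I n ω)^2 ∂Pr := by
        have := hcond2 n u u humeas hub humeas hub
        simpa [sq] using this
      have hfst : ∫ ω, u (S n 0 ω) ∂Pr = ∫ ω, I n ω ∂Pr := hcond1 n u humeas hub
      calc ∫ ω, (I n ω - cn n)^2 ∂Pr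
          = ∫ ω, ((I n ω)^2 - (2 * cn n) * I n ω + (cn n)^2) ∂Pr := by
            exact integral_congr_ae (Filter.Eventually.of_forall hexp)
        _ = ∫ ω, ((I n ω)^2 - (2 * cn n) * I n ω) ∂Pr + ∫ _ω, (cn n)^2 ∂Pr := by
            have int1 : Integrable (fun ω => (I n ω)^2 - (2 * cn n) * I n ω) Pr :=
              (hI2int n).sub ((hIint n).const_mul _)
            rw [integral_add int1 (integrable_const _)]
        _ = (∫ ω, (I n ω)^2 ∂Pr - ∫ ω, (2 * cn n) * I n ω ∂Pr) + (cn n)^2 := by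
            have int2 : Integrable (fun ω => (2 * cn n) * I n ω) Pr :=
              (hIint n).const_mul _
            rw [integral_sub (hI2int n) int2, integral_const]
            simp
        _ = (∫ ω, (I n ω)^2 ∂Pr - 2 * cn n * ∫ ω, I n ω ∂Pr) + (cn n)^2 := by
            rw [integral_const_mul]
        _ = (∫ ω, u (S n 0 ω) * u (S n 1 ω) ∂Pr)
            - 2 * cn n * (∫ ω, u (S n 0 ω) ∂Pr) + (cn n)^2 := by
            rw [hsq, hfst]
    have hcw : Tendsto cn atTop (𝓝 m) := hSweak u
    have hVtend : Tendsto (fun n => ∫ ω, (I n ω - cn n)^2 ∂Pr) atTop (𝓝 0) := by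
      have hT : Tendsto (fun n => (∫ ω, u (S n 0 ω) * u (S n 1 ω) ∂Pr)
          - 2 * cn n * (∫ ω, u (S n 0 ω) ∂Pr) + (cn n)^2) atTop
          (𝓝 (m * m - 2 * m * m + m^2)) := by
        exact ((hm2 u).sub (((hcw.const_mul 2).mul (hm1 u)))).add (hcw.pow 2)
      have : m * m - 2 * m * m + m^2 = 0 := by ring
      rw [this] at hT
      exact hT.congr (fun n => (hVar n).symm)
    -- Chebyshev
    have hle : ∀ n, Pr {ω | t ≤ |I n ω - cn n|}
        ≤ ENNReal.ofReal ((∫ ω, (I n ω - cn n)^2 ∂Pr) / t^2) := by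
      intro n
      have hsub : {ω | t ≤ |I n ω - cn n|} ⊆ {ω | t^2 ≤ (I n ω - cn n)^2} := by
        intro ω hω
        simp only [Set.mem_setOf_eq] at hω ⊢
        calc t^2 ≤ |I n ω - cn n|^2 := pow_le_pow_left₀ ht.le hω 2
          _ = (I n ω - cn n)^2 := sq_abs _
      have hIcint : Integrable (fun ω => (I n ω - cn n)^2) Pr := by
        have hmeas2 : Measurable fun ω => (I n ω - cn n)^2 :=
          ((hImeas n).sub_const _).pow_const 2
        refine (integrable_const ((1 + |cn n|)^2)).mono' hmeas2.aestronglyMeasurable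
          (Filter.Eventually.of_forall (fun ω => ?_))
        rw [Real.norm_eq_abs]
        have h1 : |I n ω - cn n| ≤ 1 + |cn n| :=
          (abs_sub _ _).trans (add_le_add_left (hIbd' n ω) _)
        calc |(I n ω - cn n)^2| = |I n ω - cn n|^2 := abs_pow _ 2
          _ ≤ (1 + |cn n|)^2 := pow_le_pow_left₀ (abs_nonneg _) h1 2
      have hcheb := mul_meas_ge_le_integral_of_nonneg
        (μ := Pr) (f := fun ω => (I n ω - cn n)^2)
        (Filter.Eventually.of_forall (fun ω => sq_nonneg _)) hIcint (t^2)
      have hm2' : (Pr {ω | t^2 ≤ (I n ω - cn n)^2}).toReal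
          ≤ (∫ ω, (I n ω - cn n)^2 ∂Pr) / t^2 := by
        rw [le_div_iff₀ (by positivity)]
        calc (Pr {ω | t^2 ≤ (I n ω - cn n)^2}).toReal * t^2
            = t^2 * (Pr {ω | t^2 ≤ (I n ω - cn n)^2}).toReal := mul_comm _ _
          _ ≤ _ := hcheb
      calc Pr {ω | t ≤ |I n ω - cn n|} ≤ Pr {ω | t^2 ≤ (I n ω - cn n)^2} :=
            measure_mono hsub
        _ ≤ ENNReal.ofReal ((∫ ω, (I n ω - cn n)^2 ∂Pr) / t^2) :=
            (ENNReal.le_ofReal_iff_toReal_le (measure_ne_top _ _)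
              (div_nonneg (integral_nonneg (fun ω => sq_nonneg _)) (by positivity))).mpr hm2'
    have hupper : Tendsto (fun n => ENNReal.ofReal ((∫ ω, (I n ω - cn n)^2 ∂Pr) / t^2))
        atTop (𝓝 0) := by
      have h0 : Tendsto (fun n => (∫ ω, (I n ω - cn n)^2 ∂Pr) / t^2) atTop (𝓝 0) := by
        have := hVtend.div_const (t^2)
        simpa using this
      have := ENNReal.tendsto_ofReal h0
      simpa using this
    exact tendsto_of_tendsto_of_tendsto_of_le_of_le tendsto_const_nhds hupper
      (fun n => zero_le) hle
  -- Step 2 : Markov bound for nonnegative test functions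
  have step2 : ∀ (u : D →ᵇ ℝ), (∀ x, 0 ≤ u x) → (∀ x, |u x| ≤ 1) →
      ∀ t ρ : ℝ, 0 < t → (∫ x, u x ∂μS) < ρ →
      ∀ᶠ n in atTop, Pr {ω | t ≤ ∫ y, u y ∂(κ n (X n ω))}
        ≤ ENNReal.ofReal (ρ / t) := by
    intro u hu0 hub t ρ ht hρ
    set I : ℕ → Ω → ℝ := fun n ω => ∫ y, u y ∂(κ n (X n ω)) with hI
    have hImeas : ∀ n, Measurable (I n) :=
      fun n => (hIm n u u.continuous.measurable).comp (hX n)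
    have hIbd' : ∀ n ω, |I n ω| ≤ 1 := fun n ω => hIbd n u hub (X n ω)
    have hIint : ∀ n, Integrable (I n) Pr := fun n => hint _ (hImeas n) (hIbd' n)
    have hEeq : ∀ n, ∫ ω, I n ω ∂Pr = ∫ ω, u (S n 0 ω) ∂Pr :=
      fun n => (hcond1 n u u.continuous.measurable hub).symm
    have hEtend : Tendsto (fun n => ∫ ω, I n ω ∂Pr) atTop (𝓝 (∫ x, u x ∂μS)) := by
      exact (hm1 u).congr (fun n => (hEeq n).symm)
    filter_upwards [hEtend.eventually_le_const hρ] with n hn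
    have hI0 : ∀ ω, 0 ≤ I n ω := fun ω => integral_nonneg (fun y => hu0 y)
    have hcheb := mul_meas_ge_le_integral_of_nonneg
      (μ := Pr) (f := I n) (Filter.Eventually.of_forall hI0) (hIint n) t
    have hm2' : (Pr {ω | t ≤ I n ω}).toReal ≤ ρ / t := by
      rw [le_div_iff₀ ht]
      calc (Pr {ω | t ≤ I n ω}).toReal * t = t * (Pr {ω | t ≤ I n ω}).toReal := mul_comm _ _
        _ ≤ ∫ ω, I n ω ∂Pr := hcheb
        _ ≤ ρ := hn
    rw [ENNReal.le_ofReal_iff_toReal_le (measure_ne_top _ _)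
      (div_nonneg (le_trans (integral_nonneg (fun x => hu0 x)) hρ.le) ht.le)]
    exact hm2'
  -- map integral identity
  have hmap : ∀ n (f : D → ℝ), Measurable f →
      ∫ y, f y ∂(Measure.map (Sn n) Pr) = ∫ ω', f (Sn n ω') ∂Pr := by
    intro n f hf
    exact integral_map (hSn n).aemeasurable hf.aestronglyMeasurable
  haveI hQprob : ∀ n, IsProbabilityMeasure (Measure.map (Sn n) Pr) :=
    fun n => Measure.isProbabilityMeasure_map (hSn n).aemeasurable
  -- Now the main argument
  rw [tendstoInMeasure_iff_dist]
  intro ε hε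
  have hsets : ∀ n, {ω | ε ≤ dist (dBL (κ n (X n ω)) (Measure.map (Sn n) Pr)) 0}
      = {ω | ε ≤ dBL (κ n (X n ω)) (Measure.map (Sn n) Pr)} := by
    intro n
    ext ω
    simp [Real.dist_eq, abs_of_nonneg (dBL_nonneg _ _)]
  simp only [hsets]
  rw [ENNReal.tendsto_nhds_zero]
  intro δ' hδ'
  set δ : ℝ≥0∞ := min δ' 1 with hδdef
  have hδ0 : δ ≠ 0 := by
    have : (0:ℝ≥0∞) < δ := lt_min hδ' zero_lt_one
    exact this.ne'
  have hδtop : δ ≠ ⊤ := ne_top_of_le_ne_top ENNReal.one_ne_top (min_le_right _ _)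
  set δr : ℝ := δ.toReal with hδr
  have hδrpos : 0 < δr := ENNReal.toReal_pos hδ0 hδtop
  -- constants
  set r : ℝ := ε / 16 with hr
  have hrpos : 0 < r := by rw [hr]; linarith
  set c : ℝ := min (1/2) (min (ε/32) (ε * δr / 32)) with hc
  have hcpos : 0 < c := by
    rw [hc]
    refine lt_min (by norm_num) (lt_min (by linarith) (by positivity))
  have hc12 : c ≤ 1/2 := min_le_left _ _
  have hc32 : c ≤ ε/32 := le_trans (min_le_right _ _) (min_le_left _ _)
  have hcδ : c ≤ ε * δr / 32 := le_trans (min_le_right _ _) (min_le_right _ _)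
  -- totally bounded set A
  obtain ⟨A, hAclosed, hAtb, hAcompl⟩ := pretight μS (ENNReal.ofReal_pos.mpr hcpos)
  have hAne : A.Nonempty := by
    by_contra hA
    rw [Set.not_nonempty_iff_eq_empty] at hA
    rw [hA, Set.compl_empty, measure_univ] at hAcompl
    have : ENNReal.ofReal c < 1 := by
      calc ENNReal.ofReal c ≤ ENNReal.ofReal (1/2) := ENNReal.ofReal_le_ofReal hc12
        _ < 1 := by
          rw [← ENNReal.ofReal_one]
          exact ENNReal.ofReal_lt_ofReal_iff_of_nonneg (by norm_num) |>.mpr (by norm_num)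
    exact absurd hAcompl (not_le.mpr this)
  -- the cutoff function w
  set w : D → ℝ := fun x => min (Metric.infDist x A / r) 1 with hw
  have hwcont : Continuous w := by
    apply Continuous.min ?_ continuous_const
    exact (Metric.continuous_infDist_pt A).div_const r
  have hw0 : ∀ x, 0 ≤ w x := by
    intro x
    apply le_min ?_ zero_le_one
    exact div_nonneg Metric.infDist_nonneg hrpos.le
  have hw1 : ∀ x, w x ≤ 1 := fun x => min_le_right _ _
  have hwb : ∀ x, |w x| ≤ 1 := fun x => abs_le.mpr ⟨by linarith [hw0 x], hw1 x⟩
  have hwA : ∀ x ∈ A, w x = 0 := by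
    intro x hx
    rw [hw]
    simp [Metric.infDist_zero_of_mem hx]
  have hwout : ∀ x, r ≤ Metric.infDist x A → w x = 1 := by
    intro x hx
    rw [hw]
    simp only [min_eq_right_iff]
    rw [le_div_iff₀ hrpos]
    linarith
  have hwint : ∫ x, w x ∂μS ≤ c := by
    have hwind : ∀ x, w x ≤ Set.indicator Aᶜ (fun _ => (1:ℝ)) x := by
      intro x
      by_cases hx : x ∈ A
      · rw [hwA x hx, Set.indicator_of_notMem (by simpa using hx)]
      · rw [Set.indicator_of_mem (by simpa using hx)]
        exact hw1 x
    have hmeasA : MeasurableSet Aᶜ := hAclosed.measurableSet.compl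
    calc ∫ x, w x ∂μS ≤ ∫ x, Set.indicator Aᶜ (fun _ => (1:ℝ)) x ∂μS := by
          apply integral_mono ?_ ?_ hwind
          · exact integrable_bd μS hwcont.measurable hwb
          · exact (integrable_const (1:ℝ)).indicator hmeasA
      _ = (μS Aᶜ).toReal := by
          rw [integral_indicator_const (1:ℝ) hmeasA]
          simp [Measure.real]
      _ ≤ c := ENNReal.toReal_le_of_le_ofReal hcpos.le hAcompl

  -- bundle w as a bounded continuous function
  set wB : D →ᵇ ℝ := BoundedContinuousFunction.ofNormedAddCommGroup w hwcont 1
    (fun x => by rw [Real.norm_eq_abs]; exact hwb x) with hwBdef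
  have hwBcoe : ⇑wB = w := rfl
  -- finite net of Lipschitz functions
  have hεnet : 0 < ε / 16 := by linarith
  obtain ⟨G, hGfin, hGne, hGprop, hGnet⟩ := net_lemma hAtb hAne hεnet
  -- events for the net functions
  set E : ℕ → (D → ℝ) → Set Ω := fun n g =>
    {ω | ε/4 ≤ |(∫ y, g y ∂(κ n (X n ω))) - ∫ ω', g (Sn n ω') ∂Pr|} with hE
  -- (a) eventually ∫ w(Sn) dPr ≤ ε/16
  have hwμ : ∫ x, wB x ∂μS ≤ c := hwint
  have hJ : ∀ᶠ n in atTop, ∫ ω', wB (Sn n ω') ∂Pr ≤ ε/16 := by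
    refine (hSweak wB).eventually_le_const ?_
    calc ∫ x, wB x ∂μS ≤ c := hwμ
      _ ≤ ε/32 := hc32
      _ < ε/16 := by linarith
  -- (b) eventually the Markov bound
  have hZ : ∀ᶠ n in atTop, Pr {ω | ε/8 ≤ ∫ y, wB y ∂(κ n (X n ω))}
      ≤ ENNReal.ofReal (δr / 2) := by
    have hstep := step2 wB (fun x => hw0 x) (fun x => hwb x) (ε/8) (2*c)
      (by linarith) (lt_of_le_of_lt hwμ (by linarith))
    refine hstep.mono (fun n hn => le_trans hn (ENNReal.ofReal_le_ofReal ?_))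
    rw [div_le_div_iff₀ (by linarith) (by norm_num)]
    nlinarith [hcδ, hδrpos, hε]
  -- (c) eventually the union of net events is small
  have hGsumtend : Tendsto (fun n => ∑ g ∈ hGfin.toFinset, Pr (E n g)) atTop (𝓝 0) := by
    have h0 : ∀ g ∈ hGfin.toFinset, Tendsto (fun n => Pr (E n g)) atTop (𝓝 0) := by
      intro g hg
      obtain ⟨hgb, hglip⟩ := hGprop g (hGfin.mem_toFinset.mp hg)
      have := step1 (BoundedContinuousFunction.ofNormedAddCommGroup g hglip.continuous 1
        (fun x => by rw [Real.norm_eq_abs]; exact hgb x)) hgb (ε/4) (by linarith)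
      exact this
    have hsum := tendsto_finset_sum hGfin.toFinset h0
    simpa using hsum
  have hGev : ∀ᶠ n in atTop, Pr (⋃ g ∈ hGfin.toFinset, E n g) ≤ ENNReal.ofReal (δr/2) := by
    have hpos : (0:ℝ≥0∞) < ENNReal.ofReal (δr/2) := ENNReal.ofReal_pos.mpr (by linarith)
    filter_upwards [hGsumtend.eventually_le_const hpos] with n hn
    exact le_trans (measure_biUnion_finset_le _ _) hn
  -- combine everything
  filter_upwards [hJ, hZ, hGev] with n hJn hZn hGn
  have hsubset : {ω | ε ≤ dBL (κ n (X n ω)) (Measure.map (Sn n) Pr)}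
      ⊆ (⋃ g ∈ hGfin.toFinset, E n g) ∪ {ω | ε/8 ≤ ∫ y, wB y ∂(κ n (X n ω))} := by
    intro ω hω
    rw [Set.mem_union]
    by_contra hcon
    push_neg at hcon
    obtain ⟨h1, h2⟩ := hcon
    have hZω : ∫ y, wB y ∂(κ n (X n ω)) < ε/8 := by
      by_contra hq
      exact h2 (by simpa using not_lt.mp hq)
    have hYg : ∀ g ∈ G, |(∫ y, g y ∂(κ n (X n ω))) - ∫ ω', g (Sn n ω') ∂Pr| ≤ ε/4 := by
      intro g hg
      by_contra hq
      push_neg at hq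
      exact h1 (Set.mem_biUnion (hGfin.mem_toFinset.mpr hg)
        (by simp only [hE, Set.mem_setOf_eq]; exact hq.le))
    -- bound the bounded-Lipschitz distance at ω
    haveI := hκP n (X n ω)
    haveI := hQprob n
    have hbound : dBL (κ n (X n ω)) (Measure.map (Sn n) Pr)
        ≤ ε/4 + 2*(3*ε/16) + 2*(∫ y, w y ∂(κ n (X n ω))) + 2*(ε/16) := by
      apply dBL_le
      intro h hb hlip
      obtain ⟨g, hgG, hgnet⟩ := hGnet h hb hlip
      obtain ⟨hgb, hglip⟩ := hGprop g hgG
      -- pointwise comparison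
      have hpt : ∀ x, |h x - g x| ≤ 3*ε/16 + 2 * w x := by
        intro x
        rcases le_or_gt r (Metric.infDist x A) with hcase | hcase
        · rw [hwout x hcase]
          calc |h x - g x| ≤ |h x| + |g x| := abs_sub _ _
            _ ≤ 1 + 1 := add_le_add (hb x) (hgb x)
            _ ≤ 3*ε/16 + 2*1 := by linarith
        · obtain ⟨a, haA, hax⟩ := (Metric.infDist_lt_iff hAne).mp hcase
          have hha := hlip.dist_le_mul x a
          have hga := hglip.dist_le_mul a x
          rw [NNReal.coe_one, one_mul, Real.dist_eq] at hha hga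
          have hnear := hgnet a haA
          have hwx := hw0 x
          have hxa : dist x a < r := hax
          calc |h x - g x| ≤ |h x - h a| + |h a - g a| + |g a - g x| := by
                have t1 : |h x - g x| ≤ |h x - g a| + |g a - g x| := by
                  have := abs_sub_le (h x) (g a) (g x)
                  linarith [this]
                have t2 : |h x - g a| ≤ |h x - h a| + |h a - g a| := abs_sub_le _ _ _
                linarith
            _ ≤ dist x a + ε/16 + dist a x := by
                refine add_le_add (add_le_add hha hnear) ?_
                calc |g a - g x| = dist (g a) (g x) := (Real.dist_eq _ _).symm
                  _ ≤ dist a x := hga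
            _ ≤ 3*ε/16 + 2 * w x := by
                rw [dist_comm a x]
                have : dist x a ≤ r := hxa.le
                rw [hr] at this
                linarith
      -- integral comparison on a probability measure
      have key : ∀ (μ : Measure D), IsProbabilityMeasure μ →
          |∫ x, h x ∂μ - ∫ x, g x ∂μ| ≤ 3*ε/16 + 2*∫ x, w x ∂μ := by
        intro μ hμ
        have hH : Integrable h μ := integrable_bd μ hlip.continuous.measurable hb
        have hG : Integrable g μ := integrable_bd μ hglip.continuous.measurable hgb
        have hW : Integrable w μ := integrable_bd μ hwcont.measurable hwb
        calc |∫ x, h x ∂μ - ∫ x, g x ∂μ| = |∫ x, (h x - g x) ∂μ| := by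
              rw [integral_sub hH hG]
          _ ≤ ∫ x, |h x - g x| ∂μ := by
              rw [← Real.norm_eq_abs]
              refine le_trans (norm_integral_le_integral_norm _) ?_
              simp [Real.norm_eq_abs]
          _ ≤ ∫ x, (3*ε/16 + 2 * w x) ∂μ := by
              refine integral_mono (hH.sub hG).abs ?_ hpt
              exact (integrable_const _).add (hW.const_mul 2)
          _ = 3*ε/16 + 2*∫ x, w x ∂μ := by
              have intc : Integrable (fun x => 2 * w x) μ := hW.const_mul 2
              rw [integral_add (integrable_const _) intc, integral_const, integral_const_mul]
              simp
      -- triangle inequality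
      have hQg : ∫ x, g x ∂(Measure.map (Sn n) Pr) = ∫ ω', g (Sn n ω') ∂Pr :=
        hmap n g hglip.continuous.measurable
      have hQw : ∫ x, w x ∂(Measure.map (Sn n) Pr) = ∫ ω', w (Sn n ω') ∂Pr :=
        hmap n w hwcont.measurable
      have t1 : |∫ x, h x ∂(κ n (X n ω)) - ∫ x, h x ∂(Measure.map (Sn n) Pr)|
          ≤ |∫ x, h x ∂(κ n (X n ω)) - ∫ x, g x ∂(κ n (X n ω))|
            + |∫ x, g x ∂(κ n (X n ω)) - ∫ x, g x ∂(Measure.map (Sn n) Pr)|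
            + |∫ x, g x ∂(Measure.map (Sn n) Pr) - ∫ x, h x ∂(Measure.map (Sn n) Pr)| := by
        have u1 := abs_sub_le (∫ x, h x ∂(κ n (X n ω))) (∫ x, g x ∂(κ n (X n ω)))
          (∫ x, h x ∂(Measure.map (Sn n) Pr))
        have u2 := abs_sub_le (∫ x, g x ∂(κ n (X n ω)))
          (∫ x, g x ∂(Measure.map (Sn n) Pr)) (∫ x, h x ∂(Measure.map (Sn n) Pr))
        linarith
      have b1 := key (κ n (X n ω)) inferInstance
      have b3' := key (Measure.map (Sn n) Pr) inferInstance
      have b3 : |∫ x, g x ∂(Measure.map (Sn n) Pr) - ∫ x, h x ∂(Measure.map (Sn n) Pr)|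
          ≤ 3*ε/16 + 2*∫ x, w x ∂(Measure.map (Sn n) Pr) := by
        rw [abs_sub_comm]
        exact b3'
      have b2 : |∫ x, g x ∂(κ n (X n ω)) - ∫ x, g x ∂(Measure.map (Sn n) Pr)| ≤ ε/4 := by
        rw [hQg]
        exact hYg g hgG
      have hJw : ∫ x, w x ∂(Measure.map (Sn n) Pr) ≤ ε/16 := by
        rw [hQw]
        exact hJn
      linarith
    have hZω' : ∫ y, w y ∂(κ n (X n ω)) < ε/8 := hZω
    have : dBL (κ n (X n ω)) (Measure.map (Sn n) Pr) < ε := by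
      calc dBL (κ n (X n ω)) (Measure.map (Sn n) Pr)
          ≤ ε/4 + 2*(3*ε/16) + 2*(∫ y, w y ∂(κ n (X n ω))) + 2*(ε/16) := hbound
        _ < ε := by linarith
    exact absurd hω (not_le.mpr this)
  calc Pr {ω | ε ≤ dBL (κ n (X n ω)) (Measure.map (Sn n) Pr)}
      ≤ Pr ((⋃ g ∈ hGfin.toFinset, E n g) ∪ {ω | ε/8 ≤ ∫ y, wB y ∂(κ n (X n ω))}) :=
        measure_mono hsubset
    _ ≤ Pr (⋃ g ∈ hGfin.toFinset, E n g) + Pr {ω | ε/8 ≤ ∫ y, wB y ∂(κ n (X n ω))} :=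
        measure_union_le _ _
    _ ≤ ENNReal.ofReal (δr/2) + ENNReal.ofReal (δr/2) := add_le_add hGn hZn
    _ = ENNReal.ofReal (δr/2 + δr/2) := (ENNReal.ofReal_add (by linarith) (by linarith)).symm
    _ = ENNReal.ofReal δr := by rw [add_halves]
    _ = δ := ENNReal.ofReal_toReal hδtop
    _ ≤ δ' := min_le_left _ _
end

section
/- Let S_n be real-valued random variables converging weakly to S whose distribution function F is continuous. Suppose the random distribution functions F_n(x) = Pr(S_n^(1) ≤ x | X_n) satisfy sup_x |F_n(x) − F(x)| → 0 in probability. Then for every α ∈ (0,1), Pr( S_n ≥ F_n⁻¹(1−α) ) → α as n → ∞. -/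
open MeasureTheory Filter Topology BoundedContinuousFunction
open scoped NNReal ENNReal

lemma aux_atom (μ : Measure ℝ) [IsProbabilityMeasure μ] (F : ℝ → ℝ)
    (hF : ∀ x, F x = (μ (Set.Iic x)).toReal) (hFcont : Continuous F) (c : ℝ) :
    μ {c} = 0 := by
  have hbound : ∀ a, a < c → (μ {c}).toReal ≤ F c - F a := by
    intro a ha
    have hsplit : Set.Iic a ∪ Set.Ioc a c = Set.Iic c := Set.Iic_union_Ioc_eq_Iic ha.le
    have hdisj : Disjoint (Set.Iic a) (Set.Ioc a c) :=
      Set.Iic_disjoint_Ioc le_rfl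
    have hm : μ (Set.Iic c) = μ (Set.Iic a) + μ (Set.Ioc a c) := by
      rw [← hsplit, measure_union hdisj measurableSet_Ioc]
    have h1 : (μ (Set.Ioc a c)).toReal = F c - F a := by
      rw [hF, hF, hm, ENNReal.toReal_add (measure_ne_top _ _) (measure_ne_top _ _)]
      ring
    rw [← h1]
    exact ENNReal.toReal_mono (measure_ne_top _ _)
      (measure_mono (by simp [Set.mem_Ioc, ha]))
  have hle : (μ {c}).toReal ≤ 0 := by
    have htend : Tendsto (fun a => F c - F a) (𝓝[<] c) (𝓝 (F c - F c)) :=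
      (tendsto_const_nhds.sub ((hFcont.tendsto c).mono_left nhdsWithin_le_nhds))
    rw [sub_self] at htend
    refine ge_of_tendsto htend ?_
    filter_upwards [self_mem_nhdsWithin] with a ha using hbound a ha
  have := ENNReal.toReal_nonneg (a := μ {c})
  have : (μ {c}).toReal = 0 := le_antisymm hle this
  rwa [ENNReal.toReal_eq_zero_iff, or_iff_left (measure_ne_top _ _)] at this

lemma aux_Ici {Ω : Type*} [MeasurableSpace Ω]
    (Pr : Measure Ω) [IsProbabilityMeasure Pr]
    (Sn : ℕ → Ω → ℝ) (hSn : ∀ n, Measurable (Sn n))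
    (μ : Measure ℝ) [IsProbabilityMeasure μ]
    (hweak : ∀ g : ℝ →ᵇ ℝ,
      Tendsto (fun n => ∫ ω, g (Sn n ω) ∂Pr) atTop (𝓝 (∫ x, g x ∂μ)))
    (c : ℝ) (hc : μ {c} = 0) :
    Tendsto (fun n => (Pr {ω | c ≤ Sn n ω}).toReal) atTop (𝓝 ((μ (Set.Ici c)).toReal)) := by
  have hmap : ∀ n, IsProbabilityMeasure (Pr.map (Sn n)) :=
    fun n => Measure.isProbabilityMeasure_map (hSn n).aemeasurable
  let P : ℕ → ProbabilityMeasure ℝ := fun n => ⟨Pr.map (Sn n), hmap n⟩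
  let Q : ProbabilityMeasure ℝ := ⟨μ, inferInstance⟩
  have hPQ : Tendsto P atTop (𝓝 Q) := by
    rw [ProbabilityMeasure.tendsto_iff_forall_integral_tendsto]
    intro f
    have : ∀ n, ∫ x, f x ∂(P n : Measure ℝ) = ∫ ω, f (Sn n ω) ∂Pr := fun n =>
      integral_map (hSn n).aemeasurable f.continuous.aestronglyMeasurable
    simpa [this, Q] using hweak f
  have hfr : Q (frontier (Set.Ici c)) = 0 := by
    simp only [frontier_Ici]
    simp [Q, ProbabilityMeasure.coeFn_def, hc]
  have key := ProbabilityMeasure.tendsto_measure_of_null_frontier_of_tendsto hPQ hfr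
  have key2 : Tendsto (fun n => ((P n (Set.Ici c) : ℝ≥0) : ℝ)) atTop
      (𝓝 ((Q (Set.Ici c) : ℝ≥0) : ℝ)) := NNReal.tendsto_coe.2 key
  have hP : ∀ n, ((P n (Set.Ici c) : ℝ≥0) : ℝ) = (Pr {ω | c ≤ Sn n ω}).toReal := by
    intro n
    have : (P n : Measure ℝ) (Set.Ici c) = Pr {ω | c ≤ Sn n ω} := by
      show Pr.map (Sn n) (Set.Ici c) = _
      rw [Measure.map_apply (hSn n) measurableSet_Ici]
      rfl
    simp only [ProbabilityMeasure.coeFn_def, this]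
    rfl
  have hQ : ((Q (Set.Ici c) : ℝ≥0) : ℝ) = (μ (Set.Ici c)).toReal := by
    simp only [Q, ProbabilityMeasure.coeFn_def]
    rfl
  simpa [hP, hQ] using key2

lemma aux_exists (μ : Measure ℝ) [IsProbabilityMeasure μ] (F : ℝ → ℝ)
    (hF : ∀ x, F x = (μ (Set.Iic x)).toReal) (hFcont : Continuous F)
    (t : ℝ) (ht : t ∈ Set.Ioo (0:ℝ) 1) : ∃ c, F c = t := by
  have hmono : Monotone F := fun a b hab => by
    rw [hF, hF]
    exact ENNReal.toReal_mono (measure_ne_top _ _) (measure_mono (Set.Iic_subset_Iic.2 hab))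
  -- F tends to 1 at top
  have htop : Tendsto F atTop (𝓝 1) := by
    have h := tendsto_measure_Iic_atTop μ
    have h2 : Tendsto (fun x => (μ (Set.Iic x)).toReal) atTop (𝓝 ((μ Set.univ).toReal)) :=
      (ENNReal.tendsto_toReal (measure_ne_top _ _)).comp h
    have : F = fun x => (μ (Set.Iic x)).toReal := funext hF
    rw [this]
    simpa [measure_univ] using h2
  -- F tends to 0 at bot
  have hbot : Tendsto F atBot (𝓝 0) := by
    have h := tendsto_measure_iInter_atBot (μ := μ) (s := Set.Iic)
      (fun x => (measurableSet_Iic).nullMeasurableSet) (fun a b hab => Set.Iic_subset_Iic.2 hab)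
      ⟨0, measure_ne_top _ _⟩
    have hempty : (⋂ x : ℝ, Set.Iic x) = ∅ := by
      ext y
      simp only [Set.mem_iInter, Set.mem_Iic, Set.mem_empty_iff_false, iff_false, not_forall]
      exact ⟨y - 1, by push_neg; linarith⟩
    rw [hempty, measure_empty] at h
    have h2 : Tendsto (fun x => (μ (Set.Iic x)).toReal) atBot (𝓝 ((0:ℝ≥0∞).toReal)) :=
      (ENNReal.tendsto_toReal (by simp)).comp h
    have : F = fun x => (μ (Set.Iic x)).toReal := funext hF
    rw [this]
    simpa using h2
  obtain ⟨b, hb⟩ := (htop.eventually (eventually_gt_nhds ht.2)).exists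
  obtain ⟨a, ha⟩ := (hbot.eventually (eventually_lt_nhds ht.1)).exists
  have hab : a ≤ b := by
    by_contra h
    push_neg at h
    exact absurd (hmono h.le) (by linarith)
  have : t ∈ Set.Icc (F a) (F b) := ⟨ha.le, hb.le⟩
  obtain ⟨c, _, hc⟩ := intermediate_value_Icc hab hFcont.continuousOn this
  exact ⟨c, hc⟩

lemma aux_Ici_toReal (μ : Measure ℝ) [IsProbabilityMeasure μ] (F : ℝ → ℝ)
    (hF : ∀ x, F x = (μ (Set.Iic x)).toReal) (c : ℝ) (hc : μ {c} = 0) :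
    (μ (Set.Ici c)).toReal = 1 - F c := by
  have hIio : μ (Set.Iio c) = μ (Set.Iic c) := by
    refine le_antisymm (measure_mono Set.Iio_subset_Iic_self) ?_
    calc μ (Set.Iic c) = μ (Set.Iio c ∪ {c}) := by rw [Set.Iio_union_right]
      _ ≤ μ (Set.Iio c) + μ {c} := measure_union_le _ _
      _ = μ (Set.Iio c) := by rw [hc, add_zero]
  have hcompl : μ (Set.Ici c) = 1 - μ (Set.Iic c) := by
    rw [← Set.compl_Iio, measure_compl measurableSet_Iio (measure_ne_top _ _), measure_univ, hIio]
  rw [hcompl, ENNReal.toReal_sub_of_le (prob_le_one) (by simp), ENNReal.toReal_one, hF]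

/-- If `S_n ⇝ S` where the distribution function `F` of `S` is continuous, and
the random (conditional bootstrap) distribution functions `F_n` satisfy
`sup_x |F_n(x) − F(x)| → 0` in probability, then for every `α ∈ (0,1)`,
`Pr(S_n ≥ F_n⁻¹(1−α)) → α` as `n → ∞`, where `F_n⁻¹` is the generalized
inverse `F_n⁻¹(y) = inf{x : F_n(x) ≥ y}`. -/
theorem stmt13 {Ω : Type*} [MeasurableSpace Ω]
    (Pr : Measure Ω) [IsProbabilityMeasure Pr]
    (Sn : ℕ → Ω → ℝ) (hSn : ∀ n, Measurable (Sn n))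
    (μ : Measure ℝ) [IsProbabilityMeasure μ] (F : ℝ → ℝ)
    (hF : ∀ x, F x = (μ (Set.Iic x)).toReal) (hFcont : Continuous F)
    (hweak : ∀ g : ℝ →ᵇ ℝ,
      Tendsto (fun n => ∫ ω, g (Sn n ω) ∂Pr) atTop (𝓝 (∫ x, g x ∂μ)))
    (Fn : ℕ → Ω → ℝ → ℝ)
    (hFnmono : ∀ n ω, Monotone (Fn n ω))
    (hFn01 : ∀ n ω x, Fn n ω x ∈ Set.Icc (0 : ℝ) 1)
    (hFnbot : ∀ n ω, Tendsto (Fn n ω) atBot (𝓝 0))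
    (hFntop : ∀ n ω, Tendsto (Fn n ω) atTop (𝓝 1))
    (hFnmeas : ∀ n (y : ℝ), Measurable fun ω => sInf {x : ℝ | y ≤ Fn n ω x})
    (hsup : TendstoInMeasure Pr
      (fun n ω => ⨆ x : ℝ, |Fn n ω x - F x|) atTop (fun _ => 0))
    (α : ℝ) (hα : α ∈ Set.Ioo (0 : ℝ) 1) :
    Tendsto (fun n =>
        (Pr {ω | sInf {x : ℝ | 1 - α ≤ Fn n ω x} ≤ Sn n ω}).toReal)
      atTop (𝓝 α) := by
  obtain ⟨hα0, hα1⟩ := hα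
  have hF01 : ∀ x, F x ∈ Set.Icc (0:ℝ) 1 := by
    intro x
    constructor
    · rw [hF]; exact ENNReal.toReal_nonneg
    · rw [hF]
      have h := ENNReal.toReal_mono (by simp) (prob_le_one (μ := μ) (s := Set.Iic x))
      simpa using h
  have hbdd : ∀ n ω, BddAbove (Set.range fun x => |Fn n ω x - F x|) := by
    intro n ω
    refine ⟨2, ?_⟩
    rintro _ ⟨x, rfl⟩
    have h1 := hFn01 n ω x
    have h2 := hF01 x
    rw [abs_le]
    constructor <;> [skip; skip] <;>
      simp only [Set.mem_Icc] at h1 h2 <;> linarith [h1.1, h1.2, h2.1, h2.2]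
  have hmono : Monotone F := fun a b hab => by
    rw [hF, hF]
    exact ENNReal.toReal_mono (measure_ne_top _ _) (measure_mono (Set.Iic_subset_Iic.2 hab))
  rw [Metric.tendsto_atTop]
  intro ε hε
  set δ : ℝ := min (ε/4) (min α (1-α) / 4) with hδdef
  have hδpos : 0 < δ := lt_min (by linarith) (by
    have : (0:ℝ) < min α (1-α) := lt_min hα0 (by linarith)
    linarith)
  have hδε : δ ≤ ε/4 := min_le_left _ _
  have hδα : 2*δ < α := by
    have h1 : δ ≤ min α (1-α) / 4 := min_le_right _ _
    have h2 : min α (1-α) ≤ α := min_le_left _ _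
    linarith
  have hδα' : 2*δ < 1-α := by
    have h1 : δ ≤ min α (1-α) / 4 := min_le_right _ _
    have h2 : min α (1-α) ≤ 1-α := min_le_right _ _
    linarith
  obtain ⟨xm, hxm⟩ := aux_exists μ F hF hFcont (1-α-2*δ) ⟨by linarith, by linarith⟩
  obtain ⟨xp, hxp⟩ := aux_exists μ F hF hFcont (1-α+2*δ) ⟨by linarith, by linarith⟩
  -- limit statements
  have hum : Tendsto (fun n => (Pr {ω | xm ≤ Sn n ω}).toReal) atTop (𝓝 (α + 2*δ)) := by
    have h := aux_Ici Pr Sn hSn μ hweak xm (aux_atom μ F hF hFcont xm)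
    rwa [aux_Ici_toReal μ F hF xm (aux_atom μ F hF hFcont xm), hxm,
      show 1 - (1-α-2*δ) = α + 2*δ by ring] at h
  have hlm : Tendsto (fun n => (Pr {ω | xp ≤ Sn n ω}).toReal) atTop (𝓝 (α - 2*δ)) := by
    have h := aux_Ici Pr Sn hSn μ hweak xp (aux_atom μ F hF hFcont xp)
    rwa [aux_Ici_toReal μ F hF xp (aux_atom μ F hF hFcont xp), hxp,
      show 1 - (1-α+2*δ) = α - 2*δ by ring] at h
  set bad : ℕ → Set Ω := fun n => {ω | δ ≤ dist (⨆ x : ℝ, |Fn n ω x - F x|) 0} with hbad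
  have hbR : Tendsto (fun n => (Pr (bad n)).toReal) atTop (𝓝 0) := by
    have h := tendstoInMeasure_iff_dist.1 hsup δ hδpos
    have h2 := (ENNReal.tendsto_toReal (by simp : (0:ℝ≥0∞) ≠ ⊤)).comp h
    simpa only [Function.comp_def, ENNReal.toReal_zero] using h2
  have hgood : ∀ n ω, ω ∉ bad n → ∀ x, |Fn n ω x - F x| < δ := by
    intro n ω hω x
    simp only [hbad, Set.mem_setOf_eq, not_le, Real.dist_eq, sub_zero] at hω
    have hs : |Fn n ω x - F x| ≤ ⨆ x : ℝ, |Fn n ω x - F x| := le_ciSup (hbdd n ω) x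
    exact lt_of_le_of_lt (hs.trans (le_abs_self _)) hω
  have hxmle : ∀ n ω, ω ∉ bad n → ∀ x ∈ {x : ℝ | 1 - α ≤ Fn n ω x}, xm ≤ x := by
    intro n ω hω x hx
    simp only [Set.mem_setOf_eq] at hx
    have h := abs_lt.1 (hgood n ω hω x)
    by_contra hcon
    push_neg at hcon
    have : F x ≤ F xm := hmono hcon.le
    rw [hxm] at this
    linarith [h.1, h.2]
  have hincl1 : ∀ n, {ω | xp ≤ Sn n ω} ⊆
      {ω | sInf {x : ℝ | 1 - α ≤ Fn n ω x} ≤ Sn n ω} ∪ bad n := by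
    intro n ω hω
    by_cases hb : ω ∈ bad n
    · exact Or.inr hb
    refine Or.inl ?_
    have h := abs_lt.1 (hgood n ω hb xp)
    rw [hxp] at h
    have hxpin : xp ∈ {x : ℝ | 1 - α ≤ Fn n ω x} := by
      simp only [Set.mem_setOf_eq]; linarith [h.1, h.2]
    have hbb : BddBelow {x : ℝ | 1 - α ≤ Fn n ω x} := ⟨xm, fun x hx => hxmle n ω hb x hx⟩
    simp only [Set.mem_setOf_eq] at hω ⊢
    exact le_trans (csInf_le hbb hxpin) hω
  have hincl2 : ∀ n, {ω | sInf {x : ℝ | 1 - α ≤ Fn n ω x} ≤ Sn n ω} ⊆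
      {ω | xm ≤ Sn n ω} ∪ bad n := by
    intro n ω hω
    by_cases hb : ω ∈ bad n
    · exact Or.inr hb
    refine Or.inl ?_
    have hne : {x : ℝ | 1 - α ≤ Fn n ω x}.Nonempty := by
      obtain ⟨x, hx⟩ :=
        ((hFntop n ω).eventually (eventually_gt_nhds (by linarith : 1 - α < 1))).exists
      exact ⟨x, hx.le⟩
    have hlb : xm ≤ sInf {x : ℝ | 1 - α ≤ Fn n ω x} :=
      le_csInf hne (fun x hx => hxmle n ω hb x hx)
    simp only [Set.mem_setOf_eq] at hω ⊢
    exact hlb.trans hω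
  have hmeasle : ∀ (A B C : Set Ω), A ⊆ B ∪ C →
      (Pr A).toReal ≤ (Pr B).toReal + (Pr C).toReal := by
    intro A B C hsub
    have h1 : Pr A ≤ Pr B + Pr C := (measure_mono hsub).trans (measure_union_le _ _)
    have h2 := ENNReal.toReal_mono
      (ENNReal.add_ne_top.2 ⟨measure_ne_top _ _, measure_ne_top _ _⟩) h1
    rwa [ENNReal.toReal_add (measure_ne_top _ _) (measure_ne_top _ _)] at h2
  have e1 := hum.eventually_lt_const (by linarith : α + 2*δ < α + 2*δ + ε/8)
  have e2 := hlm.eventually_const_lt (by linarith : α - 2*δ - ε/8 < α - 2*δ)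
  have e3 := hbR.eventually_lt_const (by linarith : (0:ℝ) < ε/8)
  obtain ⟨N, hN⟩ := eventually_atTop.1 ((e1.and (e2.and e3)))
  refine ⟨N, fun n hn => ?_⟩
  obtain ⟨h1, h2, h3⟩ := hN n hn
  have hub := hmeasle _ _ _ (hincl2 n)
  have hlb := hmeasle _ _ _ (hincl1 n)
  rw [Real.dist_eq, abs_lt]
  constructor <;> linarith
end

section
/- Let S_n be real random variables converging weakly to S with continuous distribution function F, and let F_n^M(x) = (1/M) Σ_{i=1}^M 1{S_n^(i) ≤ x} be the empirical distribution function of M bootstrap replicates. If sup_x |F_n^M(x) − F(x)| → 0 in probability as n, M → ∞, then for every α ∈ (0,1), Pr( S_n ≥ (F_n^M)⁻¹(1−α) ) → α as n, M → ∞. -/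
open MeasureTheory Filter Topology BoundedContinuousFunction

/-- The empirical CDF of the bootstrap replicates. -/
noncomputable def stmt14G {Ω : Type*} (S : ℕ → ℕ → Ω → ℝ) (p : ℕ × ℕ) (ω : Ω) (x : ℝ) : ℝ :=
  (p.2 : ℝ)⁻¹ * ∑ i ∈ Finset.range p.2, (if S p.1 i ω ≤ x then (1 : ℝ) else 0)

lemma stmt14G_nonneg {Ω : Type*} (S : ℕ → ℕ → Ω → ℝ) (p : ℕ × ℕ) (ω : Ω) (x : ℝ) :
    0 ≤ stmt14G S p ω x := by
  unfold stmt14G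
  apply mul_nonneg (by positivity)
  exact Finset.sum_nonneg fun i _ => by split_ifs <;> norm_num

lemma stmt14G_le_one {Ω : Type*} (S : ℕ → ℕ → Ω → ℝ) (p : ℕ × ℕ) (ω : Ω) (x : ℝ) :
    stmt14G S p ω x ≤ 1 := by
  unfold stmt14G
  rcases Nat.eq_zero_or_pos p.2 with h | h
  · simp [h]
  · have hsum : ∑ i ∈ Finset.range p.2, (if S p.1 i ω ≤ x then (1 : ℝ) else 0) ≤ (p.2 : ℝ) := by
      calc ∑ i ∈ Finset.range p.2, (if S p.1 i ω ≤ x then (1 : ℝ) else 0)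
          ≤ ∑ i ∈ Finset.range p.2, (1 : ℝ) :=
            Finset.sum_le_sum fun i _ => by split_ifs <;> norm_num
        _ = (p.2 : ℝ) := by simp
    have hpos : (0 : ℝ) < (p.2 : ℝ) := by exact_mod_cast h
    calc ((p.2 : ℝ))⁻¹ * ∑ i ∈ Finset.range p.2, (if S p.1 i ω ≤ x then (1 : ℝ) else 0)
        ≤ ((p.2 : ℝ))⁻¹ * (p.2 : ℝ) := by
          exact mul_le_mul_of_nonneg_left hsum (by positivity)
      _ = 1 := inv_mul_cancel₀ hpos.ne'

lemma stmt14_aux_Iio {μ : Measure ℝ} [IsProbabilityMeasure μ] {F : ℝ → ℝ}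
    (hF : ∀ x, F x = (μ (Set.Iic x)).toReal) (hFcont : Continuous F) (c : ℝ) :
    μ (Set.Iio c) = μ (Set.Iic c) := by
  have hmono : Monotone (fun n : ℕ => Set.Iic (c - ((n : ℝ) + 1)⁻¹)) := by
    intro m n hmn
    apply Set.Iic_subset_Iic.2
    have : ((m : ℝ) + 1)⁻¹ ≥ ((n : ℝ) + 1)⁻¹ := by
      apply inv_anti₀ (by positivity)
      exact_mod_cast Nat.add_le_add_right hmn 1
    linarith
  have hU : (⋃ n : ℕ, Set.Iic (c - ((n : ℝ) + 1)⁻¹)) = Set.Iio c := by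
    ext x
    simp only [Set.mem_iUnion, Set.mem_Iic, Set.mem_Iio]
    constructor
    · rintro ⟨n, hn⟩
      have : (0 : ℝ) < ((n : ℝ) + 1)⁻¹ := by positivity
      linarith
    · intro hx
      obtain ⟨n, hn⟩ := exists_nat_gt (c - x)⁻¹
      refine ⟨n, ?_⟩
      have hcx : (0 : ℝ) < c - x := by linarith
      have h1 : ((n : ℝ) + 1)⁻¹ < c - x := by
        rw [inv_lt_comm₀ (by positivity) hcx]
        linarith
      linarith
  have hten := tendsto_measure_iUnion_atTop (μ := μ) hmono
  rw [hU] at hten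
  have h1 : Tendsto (fun n : ℕ => F (c - ((n : ℝ) + 1)⁻¹)) atTop
      (𝓝 ((μ (Set.Iio c)).toReal)) := by
    simp only [hF]
    exact (ENNReal.tendsto_toReal (measure_ne_top _ _)).comp hten
  have h2 : Tendsto (fun n : ℕ => F (c - ((n : ℝ) + 1)⁻¹)) atTop (𝓝 (F c)) := by
    apply (hFcont.tendsto c).comp
    have : Tendsto (fun n : ℕ => ((n : ℝ) + 1)⁻¹) atTop (𝓝 0) := by
      apply tendsto_inv_atTop_zero.comp
      exact tendsto_atTop_add_const_right _ 1 tendsto_natCast_atTop_atTop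
    have := (tendsto_const_nhds (x := c)).sub this
    simpa using this
  have heq : (μ (Set.Iio c)).toReal = F c := tendsto_nhds_unique h1 h2
  exact (ENNReal.toReal_eq_toReal_iff' (measure_ne_top _ _) (measure_ne_top _ _)).mp
    (by rw [heq, hF])

lemma stmt14_aux_atomless {μ : Measure ℝ} [IsProbabilityMeasure μ] {F : ℝ → ℝ}
    (hF : ∀ x, F x = (μ (Set.Iic x)).toReal) (hFcont : Continuous F) (c : ℝ) :
    μ {c} = 0 := by
  have hd : μ {c} = μ (Set.Iic c) - μ (Set.Iio c) := by
    rw [← Set.Iic_sdiff_Iio_same]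
    exact measure_diff Set.Iio_subset_Iic_self measurableSet_Iio.nullMeasurableSet
      (measure_ne_top _ _)
  rw [hd, stmt14_aux_Iio hF hFcont, tsub_self]

lemma stmt14_aux_port {Ω : Type*} [MeasurableSpace Ω]
    (Pr : Measure Ω) [IsProbabilityMeasure Pr]
    (Sn : ℕ → Ω → ℝ) (hSn : ∀ n, Measurable (Sn n))
    (μ : Measure ℝ) [IsProbabilityMeasure μ] (F : ℝ → ℝ)
    (hF : ∀ x, F x = (μ (Set.Iic x)).toReal) (hFcont : Continuous F)
    (hweak : ∀ g : ℝ →ᵇ ℝ,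
      Tendsto (fun n => ∫ ω, g (Sn n ω) ∂Pr) atTop (𝓝 (∫ x, g x ∂μ)))
    (c : ℝ) :
    Tendsto (fun n => (Pr {ω | c ≤ Sn n ω}).toReal) atTop (𝓝 (1 - F c)) := by
  set νn : ℕ → ProbabilityMeasure ℝ := fun n =>
    ⟨Pr.map (Sn n), Measure.isProbabilityMeasure_map (hSn n).aemeasurable⟩ with hνn
  set μP : ProbabilityMeasure ℝ := ⟨μ, inferInstance⟩ with hμP
  have hconv : Tendsto νn atTop (𝓝 μP) := by
    refine ProbabilityMeasure.tendsto_iff_forall_integral_tendsto.mpr fun g => ?_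
    have hmap : ∀ n, ∫ x, g x ∂((νn n : Measure ℝ)) = ∫ ω, g (Sn n ω) ∂Pr := fun n =>
      integral_map (hSn n).aemeasurable g.continuous.measurable.aestronglyMeasurable
    simp only [hmap]
    exact hweak g
  have hnull : (μP : Measure ℝ) (frontier (Set.Ici c)) = 0 := by
    rw [frontier_Ici]
    exact stmt14_aux_atomless hF hFcont c
  have key := ProbabilityMeasure.tendsto_measure_of_null_frontier_of_tendsto' hconv hnull
  have key2 := (ENNReal.tendsto_toReal (measure_ne_top (μP : Measure ℝ) _)).comp key
  have hpre : ∀ n, ((νn n : Measure ℝ) (Set.Ici c)) = Pr {ω | c ≤ Sn n ω} := by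
    intro n
    show (Pr.map (Sn n)) (Set.Ici c) = _
    rw [Measure.map_apply (hSn n) measurableSet_Ici]
    rfl
  have hval : ((μP : Measure ℝ) (Set.Ici c)).toReal = 1 - F c := by
    show (μ (Set.Ici c)).toReal = 1 - F c
    have h1 : μ (Set.Ici c) = 1 - μ (Set.Iio c) := by
      rw [← Set.compl_Iio, measure_compl measurableSet_Iio (measure_ne_top _ _), measure_univ]
    rw [h1, stmt14_aux_Iio hF hFcont,
      ENNReal.toReal_sub_of_le (by exact prob_le_one) (by simp), ENNReal.toReal_one, hF]
  rw [hval] at key2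
  convert key2 using 2 with n
  simp only [Function.comp_apply, hpre]

/-- If `S_n ⇝ S` where the distribution function `F` of `S` is continuous, and
the empirical distribution function `F_n^M(x) = (1/M) Σ_{i<M} 1{S_n^{(i)} ≤ x}`
of the bootstrap replicates satisfies `sup_x |F_n^M(x) − F(x)| → 0` in
probability as `n, M → ∞` jointly, then for every `α ∈ (0,1)`,
`Pr(S_n ≥ (F_n^M)⁻¹(1−α)) → α` as `n, M → ∞`, where `(F_n^M)⁻¹` is the
generalized inverse. -/
theorem stmt14 {Ω : Type*} [MeasurableSpace Ω]
    (Pr : Measure Ω) [IsProbabilityMeasure Pr]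
    (Sn : ℕ → Ω → ℝ) (hSn : ∀ n, Measurable (Sn n))
    (S : ℕ → ℕ → Ω → ℝ) (hS : ∀ n i, Measurable (S n i))
    (μ : Measure ℝ) [IsProbabilityMeasure μ] (F : ℝ → ℝ)
    (hF : ∀ x, F x = (μ (Set.Iic x)).toReal) (hFcont : Continuous F)
    (hweak : ∀ g : ℝ →ᵇ ℝ,
      Tendsto (fun n => ∫ ω, g (Sn n ω) ∂Pr) atTop (𝓝 (∫ x, g x ∂μ)))
    (hsup : TendstoInMeasure Pr
      (fun p : ℕ × ℕ => fun ω => ⨆ x : ℝ,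
        |(p.2 : ℝ)⁻¹ * ∑ i ∈ Finset.range p.2,
            (if S p.1 i ω ≤ x then (1 : ℝ) else 0) - F x|)
      atTop (fun _ => 0))
    (α : ℝ) (hα : α ∈ Set.Ioo (0 : ℝ) 1) :
    Tendsto (fun p : ℕ × ℕ =>
        (Pr {ω | sInf {x : ℝ | 1 - α ≤ (p.2 : ℝ)⁻¹ * ∑ i ∈ Finset.range p.2,
            (if S p.1 i ω ≤ x then (1 : ℝ) else 0)} ≤ Sn p.1 ω}).toReal)
      atTop (𝓝 α) := by
  obtain ⟨hα0, hα1⟩ := hα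
  have hsup' : TendstoInMeasure Pr
      (fun p : ℕ × ℕ => fun ω => ⨆ x : ℝ, |stmt14G S p ω x - F x|)
      atTop (fun _ => 0) := hsup
  show Tendsto (fun p : ℕ × ℕ =>
      (Pr {ω | sInf {x : ℝ | 1 - α ≤ stmt14G S p ω x} ≤ Sn p.1 ω}).toReal)
    atTop (𝓝 α)
  -- basic facts about F
  have hF0 : ∀ x, 0 ≤ F x := fun x => by rw [hF]; exact ENNReal.toReal_nonneg
  have hF1 : ∀ x, F x ≤ 1 := fun x => by
    rw [hF]
    simpa using ENNReal.toReal_mono ENNReal.one_ne_top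
      (prob_le_one (α := ℝ) (μ := μ) (s := Set.Iic x))
  have hFmono : Monotone F := fun x y hxy => by
    rw [hF, hF]
    exact ENNReal.toReal_mono (measure_ne_top _ _)
      (measure_mono (Set.Iic_subset_Iic.2 hxy))
  -- boundedness of the discrepancy
  have hbdd : ∀ (p : ℕ × ℕ) (ω : Ω), BddAbove (Set.range fun x => |stmt14G S p ω x - F x|) := by
    intro p ω
    refine ⟨1, ?_⟩
    rintro r ⟨x, rfl⟩
    have h1 := stmt14G_nonneg S p ω x
    have h2 := stmt14G_le_one S p ω x
    have h3 := hF0 x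
    have h4 := hF1 x
    rw [abs_le]
    constructor <;> linarith
  have hsupnn : ∀ (p : ℕ × ℕ) (ω : Ω), 0 ≤ ⨆ x : ℝ, |stmt14G S p ω x - F x| :=
    fun p ω => le_trans (abs_nonneg _) (le_ciSup (hbdd p ω) 0)
  -- existence of quantile-like points
  have hexlow : ∀ t : ℝ, 0 < t → ∃ x, F x < t := by
    intro t ht
    have hanti : Antitone (fun n : ℕ => Set.Iic (-(n : ℝ))) := by
      intro m n hmn
      exact Set.Iic_subset_Iic.2 (by exact_mod_cast neg_le_neg (Nat.cast_le.2 hmn))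
    have hint : (⋂ n : ℕ, Set.Iic (-(n : ℝ))) = ∅ := by
      ext x
      simp only [Set.mem_iInter, Set.mem_Iic, Set.mem_empty_iff_false, iff_false, not_forall,
        not_le]
      obtain ⟨n, hn⟩ := exists_nat_gt (-x)
      exact ⟨n, by linarith⟩
    have hten := tendsto_measure_iInter_atTop (μ := μ)
      (fun n => measurableSet_Iic.nullMeasurableSet) hanti ⟨0, measure_ne_top _ _⟩
    rw [hint] at hten
    simp only [measure_empty] at hten
    have htenR : Tendsto (fun n : ℕ => F (-(n : ℝ))) atTop (𝓝 0) := by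
      have := (ENNReal.tendsto_toReal (by simp)).comp hten
      simp only [Function.comp_apply, ENNReal.toReal_zero] at this
      exact this.congr fun n => (hF _).symm
    obtain ⟨n, hn⟩ := (htenR.eventually (eventually_lt_nhds ht)).exists
    exact ⟨-(n : ℝ), hn⟩
  have hexhigh : ∀ t : ℝ, t < 1 → ∃ x, t < F x := by
    intro t ht
    have hten := tendsto_measure_Iic_atTop (μ := μ)
    rw [measure_univ] at hten
    have htenR : Tendsto F atTop (𝓝 1) := by
      have := (ENNReal.tendsto_toReal (by simp)).comp hten
      simp only [Function.comp_apply, ENNReal.toReal_one] at this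
      exact this.congr fun x => (hF _).symm
    exact (htenR.eventually (eventually_gt_nhds ht)).exists
  have hIVT : ∀ t : ℝ, 0 < t → t < 1 → ∃ x, F x = t := by
    intro t ht0 ht1
    obtain ⟨x0, hx0⟩ := hexlow t ht0
    obtain ⟨x1, hx1⟩ := hexhigh t ht1
    have := intermediate_value_uIcc (a := x0) (b := x1) hFcont.continuousOn
    have hmem : t ∈ Set.uIcc (F x0) (F x1) :=
      Set.Icc_subset_uIcc ⟨le_of_lt hx0, le_of_lt hx1⟩
    obtain ⟨x, _, hx⟩ := this hmem
    exact ⟨x, hx⟩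
  -- main ε–δ argument
  rw [Metric.tendsto_nhds]
  intro δ hδ
  set ε : ℝ := min (δ / 5) (min (α / 3) ((1 - α) / 3)) with hεdef
  have hε : 0 < ε := by
    apply lt_min (by linarith)
    exact lt_min (by linarith) (by linarith)
  have hε5 : ε ≤ δ / 5 := min_le_left _ _
  have hεα : ε ≤ α / 3 := le_trans (min_le_right _ _) (min_le_left _ _)
  have hεα' : ε ≤ (1 - α) / 3 := le_trans (min_le_right _ _) (min_le_right _ _)
  obtain ⟨a, ha⟩ := hIVT (1 - α - 2 * ε) (by linarith) (by linarith)
  obtain ⟨b, hb⟩ := hIVT (1 - α + 2 * ε) (by linarith) (by linarith)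
  have hfst : Tendsto (Prod.fst : ℕ × ℕ → ℕ) atTop atTop := by
    rw [← prod_atTop_atTop_eq]
    exact tendsto_fst
  have portA := stmt14_aux_port Pr Sn hSn μ F hF hFcont hweak a
  have portB := stmt14_aux_port Pr Sn hSn μ F hF hFcont hweak b
  have h1 : ∀ᶠ p : ℕ × ℕ in atTop,
      |(Pr {ω | a ≤ Sn p.1 ω}).toReal - (1 - F a)| < ε := by
    have := Metric.tendsto_nhds.mp portA ε hε
    filter_upwards [hfst.eventually this] with p hp
    rw [Real.dist_eq] at hp
    exact hp
  have h2 : ∀ᶠ p : ℕ × ℕ in atTop,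
      |(Pr {ω | b ≤ Sn p.1 ω}).toReal - (1 - F b)| < ε := by
    have := Metric.tendsto_nhds.mp portB ε hε
    filter_upwards [hfst.eventually this] with p hp
    rw [Real.dist_eq] at hp
    exact hp
  -- the bad set
  have hbadsub : ∀ p : ℕ × ℕ,
      {ω | ε ≤ ⨆ x : ℝ, |stmt14G S p ω x - F x|} ⊆
        {ω | ε ≤ dist ((fun ω => ⨆ x : ℝ, |stmt14G S p ω x - F x|) ω) ((fun _ : Ω => (0:ℝ)) ω)} := by
    intro p ω hω
    simp only [Set.mem_setOf_eq, Real.dist_eq, sub_zero] at hω ⊢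
    exact le_trans hω (le_abs_self _)
  have hbadten : Tendsto (fun p : ℕ × ℕ =>
      Pr {ω | ε ≤ ⨆ x : ℝ, |stmt14G S p ω x - F x|}) atTop (𝓝 0) := by
    have hb0 := (tendstoInMeasure_iff_dist.mp hsup') ε hε
    exact tendsto_of_tendsto_of_tendsto_of_le_of_le tendsto_const_nhds hb0
      (fun p => zero_le) (fun p => measure_mono (hbadsub p))
  have h3 : ∀ᶠ p : ℕ × ℕ in atTop,
      (Pr {ω | ε ≤ ⨆ x : ℝ, |stmt14G S p ω x - F x|}).toReal < ε := by
    have := (ENNReal.tendsto_toReal (by simp)).comp hbadten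
    simp only [Function.comp_apply, ENNReal.toReal_zero] at this
    exact this.eventually (eventually_lt_nhds hε)
  filter_upwards [h1, h2, h3] with p hp1 hp2 hp3
  set Bad : Set Ω := {ω | ε ≤ ⨆ x : ℝ, |stmt14G S p ω x - F x|} with hBad
  set E : Set Ω := {ω | sInf {x : ℝ | 1 - α ≤ stmt14G S p ω x} ≤ Sn p.1 ω} with hE
  -- pointwise bounds on good ω
  have hgoodq : ∀ ω, ω ∉ Bad →
      a ≤ sInf {x : ℝ | 1 - α ≤ stmt14G S p ω x} ∧
      sInf {x : ℝ | 1 - α ≤ stmt14G S p ω x} ≤ b := by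
    intro ω hω
    have hgood : ∀ x, |stmt14G S p ω x - F x| < ε := by
      intro x
      exact lt_of_le_of_lt (le_ciSup (hbdd p ω) x) (not_le.mp hω)
    have hbmem : b ∈ {x : ℝ | 1 - α ≤ stmt14G S p ω x} := by
      have h := (abs_lt.mp (hgood b)).1
      rw [hb] at h
      simp only [Set.mem_setOf_eq]
      linarith
    have hlb : ∀ x ∈ {x : ℝ | 1 - α ≤ stmt14G S p ω x}, a ≤ x := by
      intro x hx
      by_contra hax
      push_neg at hax
      have hFx : F x ≤ F a := hFmono hax.le
      have := (abs_lt.mp (hgood x)).2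
      simp only [Set.mem_setOf_eq] at hx
      rw [ha] at hFx
      linarith
    exact ⟨le_csInf ⟨b, hbmem⟩ hlb, csInf_le ⟨a, hlb⟩ hbmem⟩
  have hsub1 : E ⊆ {ω | a ≤ Sn p.1 ω} ∪ Bad := by
    intro ω hω
    by_cases hbad : ω ∈ Bad
    · exact Or.inr hbad
    · left
      exact le_trans (hgoodq ω hbad).1 hω
  have hsub2 : {ω | b ≤ Sn p.1 ω} ⊆ E ∪ Bad := by
    intro ω hω
    by_cases hbad : ω ∈ Bad
    · exact Or.inr hbad
    · left
      exact le_trans (hgoodq ω hbad).2 hω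
  -- measure inequalities
  have hne1 : Pr {ω | a ≤ Sn p.1 ω} + Pr Bad ≠ ⊤ :=
    ENNReal.add_ne_top.2 ⟨measure_ne_top _ _, measure_ne_top _ _⟩
  have hne2 : Pr E + Pr Bad ≠ ⊤ :=
    ENNReal.add_ne_top.2 ⟨measure_ne_top _ _, measure_ne_top _ _⟩
  have hub : (Pr E).toReal ≤ (Pr {ω | a ≤ Sn p.1 ω}).toReal + (Pr Bad).toReal := by
    have := (measure_mono (μ := Pr) hsub1).trans (measure_union_le _ _)
    have := ENNReal.toReal_mono hne1 this
    rwa [ENNReal.toReal_add (measure_ne_top _ _) (measure_ne_top _ _)] at this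
  have hlbP : (Pr {ω | b ≤ Sn p.1 ω}).toReal ≤ (Pr E).toReal + (Pr Bad).toReal := by
    have := (measure_mono (μ := Pr) hsub2).trans (measure_union_le _ _)
    have := ENNReal.toReal_mono hne2 this
    rwa [ENNReal.toReal_add (measure_ne_top _ _) (measure_ne_top _ _)] at this
  have hp1' := abs_lt.mp hp1
  have hp2' := abs_lt.mp hp2
  rw [Real.dist_eq, abs_lt]
  rw [ha] at hp1'
  rw [hb] at hp2'
  constructor <;> [nlinarith [hp1'.1, hp1'.2, hp2'.1, hp2'.2, hp3, hub, hlbP, hε5, hδ];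
    nlinarith [hp1'.1, hp1'.2, hp2'.1, hp2'.2, hp3, hub, hlbP, hε5, hδ]]
end
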